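/- arXiv:1301.1782 — 10 statements merged into one kernel-verified Lean document; each statement's English description precedes it below -/
import Mathlib

section
/- Let (X,d) be a non-branching geodesic complete separable metric space, h:[0,∞)→[0,∞) strictly convex and non-decreasing, c(x,y):=h(d(x,y)), and let Γ⊂X×X be c-cyclically monotone. If (x₀,y₀),(x₁,y₁)∈Γ are distinct pairs, then for every t∈(0,1), every t-intermediate point x₀(t) of (x₀,y₀) and every t-intermediate point x₁(t) of (x₁,y₁) satisfy d(x₀(t),x₁(t))>0. -/
open Set Metric

/-- A geodesic parametrized on `[0,1]`: `d(γ_s,γ_t) = |s-t| · d(γ_0,γ_1)`. -/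
def IsGeodesic {X : Type*} [MetricSpace X] (γ : ℝ → X) : Prop :=
  ∀ s ∈ Set.Icc (0:ℝ) 1, ∀ t ∈ Set.Icc (0:ℝ) 1,
    dist (γ s) (γ t) = |s - t| * dist (γ 0) (γ 1)

/-- A geodesic metric space: every pair of points is joined by a geodesic. -/
def GeodesicMetricSpace (X : Type*) [MetricSpace X] : Prop :=
  ∀ x y : X, ∃ γ : ℝ → X, IsGeodesic γ ∧ γ 0 = x ∧ γ 1 = y

/-- Non-branching: two geodesics agreeing on `[0,t]` for some `t ∈ (0,1)` agree on `[0,1]`. -/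
def NonBranching (X : Type*) [MetricSpace X] : Prop :=
  ∀ γ₁ γ₂ : ℝ → X, IsGeodesic γ₁ → IsGeodesic γ₂ →
    ∀ t ∈ Set.Ioo (0:ℝ) 1, (∀ s ∈ Set.Icc (0:ℝ) t, γ₁ s = γ₂ s) →
      ∀ s ∈ Set.Icc (0:ℝ) 1, γ₁ s = γ₂ s

/-- `c`-cyclical monotonicity of a set `Γ ⊆ X × X`. -/
def CyclicallyMonotone {X : Type*} (c : X → X → ℝ) (Γ : Set (X × X)) : Prop :=
  ∀ (N : ℕ) (p : Fin (N + 1) → X × X), (∀ i, p i ∈ Γ) →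
    ∑ i, c (p i).1 (p i).2 ≤ ∑ i, c (p (i + 1)).1 (p i).2

/-- `z` is a `t`-intermediate point of `(x,y)`. -/
def IsIntermediate {X : Type*} [MetricSpace X] (t : ℝ) (x y z : X) : Prop :=
  dist x z = t * dist x y ∧ dist z y = (1 - t) * dist x y

lemma geodesic_concat {X : Type*} [MetricSpace X] (σ τ : ℝ → X)
    (hσ : IsGeodesic σ) (hτ : IsGeodesic τ) (a D : ℝ) (ha : a ∈ Set.Ioo (0:ℝ) 1)
    (hmid : σ 1 = τ 0) (h1 : dist (σ 0) (σ 1) = a * D)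
    (h2 : dist (τ 0) (τ 1) = (1 - a) * D) (hD : dist (σ 0) (τ 1) = D) :
    IsGeodesic (fun s => if s ≤ a then σ (s / a) else τ ((s - a) / (1 - a))) := by
  obtain ⟨ha0, ha1⟩ := ha
  have ha0' : a ≠ 0 := ne_of_gt ha0
  have h1a : (0:ℝ) < 1 - a := by linarith
  have h1a' : (1:ℝ) - a ≠ 0 := ne_of_gt h1a
  set γ : ℝ → X := fun s => if s ≤ a then σ (s / a) else τ ((s - a) / (1 - a)) with hγ
  have hγ0 : γ 0 = σ 0 := by simp [hγ, ha0.le]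
  have hγ1 : γ 1 = τ 1 := by
    simp only [hγ]
    rw [if_neg (by linarith), div_self h1a']
  have hends : dist (γ 0) (γ 1) = D := by rw [hγ0, hγ1, hD]
  have hσval : ∀ s, 0 ≤ s → s ≤ a →
      dist (σ 0) (γ s) = s * D ∧ dist (γ s) (σ 1) = (a - s) * D := by
    intro s hs0 hsa
    have hmem : s / a ∈ Set.Icc (0:ℝ) 1 := ⟨div_nonneg hs0 ha0.le, (div_le_one ha0).2 hsa⟩
    have hval : γ s = σ (s / a) := if_pos hsa
    constructor
    · rw [hval, hσ 0 (by norm_num) (s/a) hmem, h1]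
      rw [abs_sub_comm, sub_zero, abs_of_nonneg hmem.1]
      field_simp
    · rw [hval, hσ (s/a) hmem 1 (by norm_num), h1]
      rw [abs_of_nonpos (by linarith [hmem.2])]
      field_simp
      ring
  have hτval : ∀ u, a < u → u ≤ 1 →
      dist (τ 0) (γ u) = (u - a) * D ∧ dist (γ u) (τ 1) = (1 - u) * D := by
    intro u hau hu1
    have hmem : (u - a) / (1 - a) ∈ Set.Icc (0:ℝ) 1 :=
      ⟨div_nonneg (by linarith) h1a.le, (div_le_one h1a).2 (by linarith)⟩
    have hval : γ u = τ ((u - a) / (1 - a)) := if_neg (not_le.2 hau)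
    constructor
    · rw [hval, hτ 0 (by norm_num) _ hmem, h2]
      rw [abs_sub_comm, sub_zero, abs_of_nonneg hmem.1]
      field_simp
    · rw [hval, hτ _ hmem 1 (by norm_num), h2]
      rw [abs_of_nonpos (by linarith [hmem.2])]
      field_simp
      ring
  have key : ∀ s ∈ Set.Icc (0:ℝ) 1, ∀ u ∈ Set.Icc (0:ℝ) 1, s ≤ u →
      dist (γ s) (γ u) = (u - s) * D := by
    intro s hs u hu hsu
    by_cases hua : u ≤ a
    · have hvs : γ s = σ (s/a) := if_pos (le_trans hsu hua)
      have hvu : γ u = σ (u/a) := if_pos hua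
      have hms : s / a ∈ Set.Icc (0:ℝ) 1 :=
        ⟨div_nonneg hs.1 ha0.le, (div_le_one ha0).2 (le_trans hsu hua)⟩
      have hmu : u / a ∈ Set.Icc (0:ℝ) 1 :=
        ⟨div_nonneg hu.1 ha0.le, (div_le_one ha0).2 hua⟩
      rw [hvs, hvu, hσ _ hms _ hmu, h1]
      rw [abs_of_nonpos (sub_nonpos.2 (by gcongr))]
      field_simp
      ring
    · by_cases hsa : s ≤ a
      · have A := hσval s hs.1 hsa
        have B := hτval u (not_le.1 hua) hu.2
        have up : dist (γ s) (γ u) ≤ (u - s) * D := by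
          calc dist (γ s) (γ u) ≤ dist (γ s) (σ 1) + dist (τ 0) (γ u) := by
                rw [hmid]; exact dist_triangle _ _ _
            _ = (a - s) * D + (u - a) * D := by rw [A.2, B.1]
            _ = (u - s) * D := by ring
        have lo : (u - s) * D ≤ dist (γ s) (γ u) := by
          have h4 := dist_triangle4 (σ 0) (γ s) (γ u) (τ 1)
          rw [hD, A.1, B.2] at h4
          linarith
        linarith
      · have hsa' := not_le.1 hsa
        have hvs : γ s = τ ((s - a)/(1 - a)) := if_neg hsa
        have hvu : γ u = τ ((u - a)/(1 - a)) := if_neg (not_le.2 (lt_of_lt_of_le hsa' hsu))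
        have hms : (s - a) / (1 - a) ∈ Set.Icc (0:ℝ) 1 :=
          ⟨div_nonneg (by linarith) h1a.le, (div_le_one h1a).2 (by linarith [hs.2])⟩
        have hmu : (u - a) / (1 - a) ∈ Set.Icc (0:ℝ) 1 :=
          ⟨div_nonneg (by linarith) h1a.le, (div_le_one h1a).2 (by linarith [hu.2])⟩
        rw [hvs, hvu, hτ _ hms _ hmu, h2]
        rw [abs_of_nonpos (sub_nonpos.2 (by gcongr))]
        field_simp
        ring
  intro s hs u hu
  rcases le_total s u with hle | hle
  · rw [key s hs u hu hle, hends, abs_sub_comm s u, abs_of_nonneg (sub_nonneg.2 hle)]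
  · rw [dist_comm, key u hu s hs hle, hends, abs_of_nonneg (sub_nonneg.2 hle)]

theorem noncrossing
    {X : Type*} [MetricSpace X] [CompleteSpace X] [TopologicalSpace.SeparableSpace X]
    (hgeo : GeodesicMetricSpace X) (hnb : NonBranching X)
    (h : ℝ → ℝ) (hconv : StrictConvexOn ℝ (Set.Ici (0:ℝ)) h)
    (hmono : MonotoneOn h (Set.Ici (0:ℝ))) (hpos : ∀ x ∈ Set.Ici (0:ℝ), 0 ≤ h x)
    (Γ : Set (X × X)) (hΓ : CyclicallyMonotone (fun x y => h (dist x y)) Γ)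
    (x₀ y₀ x₁ y₁ : X) (h₀ : (x₀, y₀) ∈ Γ) (h₁ : (x₁, y₁) ∈ Γ)
    (hne : (x₀, y₀) ≠ (x₁, y₁))
    (t : ℝ) (ht : t ∈ Set.Ioo (0:ℝ) 1)
    (z₀ z₁ : X) (hz₀ : IsIntermediate t x₀ y₀ z₀) (hz₁ : IsIntermediate t x₁ y₁ z₁) :
    0 < dist z₀ z₁ := by
  -- auxiliary: strictly convex monotone h is injective on pairs with equal values
  have haux : ∀ a b : ℝ, 0 ≤ a → a ≤ b → h a = h b → a = b := by
    intro a b ha0 hab hval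
    by_contra hab'
    have hlt : a < b := lt_of_le_of_ne hab hab'
    have hb0 : (0:ℝ) ≤ b := le_trans ha0 hab
    have hs := hconv.2 (mem_Ici.2 ha0) (mem_Ici.2 hb0) hab'
      (by norm_num : (0:ℝ) < 1/2) (by norm_num : (0:ℝ) < 1/2) (by norm_num)
    simp only [smul_eq_mul] at hs
    have hmem : (1/2 : ℝ) * a + (1/2) * b ∈ Set.Ici (0:ℝ) := by
      simp only [mem_Ici]; linarith
    have hmle : h a ≤ h ((1/2 : ℝ) * a + (1/2) * b) :=
      hmono (mem_Ici.2 ha0) hmem (by linarith)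
    linarith
  by_contra hcon
  have hz : z₀ = z₁ := dist_eq_zero.1 (le_antisymm (not_lt.1 hcon) dist_nonneg)
  subst hz
  obtain ⟨ht0, ht1⟩ := ht
  obtain ⟨ha₀, hb₀⟩ := hz₀
  obtain ⟨ha₁, hb₁⟩ := hz₁
  have hd₀ : (0:ℝ) ≤ dist x₀ y₀ := dist_nonneg
  have hd₁ : (0:ℝ) ≤ dist x₁ y₁ := dist_nonneg
  have key : h (dist x₀ y₀) + h (dist x₁ y₁) ≤ h (dist x₁ y₀) + h (dist x₀ y₁) := by
    have := hΓ 1 ![(x₀,y₀),(x₁,y₁)] (by intro i; fin_cases i <;> simpa)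
    simpa [Fin.sum_univ_two] using this
  have tri₁ : dist x₁ y₀ ≤ t * dist x₁ y₁ + (1-t) * dist x₀ y₀ := by
    calc dist x₁ y₀ ≤ dist x₁ z₀ + dist z₀ y₀ := dist_triangle _ _ _
      _ = t * dist x₁ y₁ + (1-t) * dist x₀ y₀ := by rw [ha₁, hb₀]
  have tri₂ : dist x₀ y₁ ≤ t * dist x₀ y₀ + (1-t) * dist x₁ y₁ := by
    calc dist x₀ y₁ ≤ dist x₀ z₀ + dist z₀ y₁ := dist_triangle _ _ _
      _ = t * dist x₀ y₀ + (1-t) * dist x₁ y₁ := by rw [ha₀, hb₁]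
  have hcomb₁ : (0:ℝ) ≤ t * dist x₁ y₁ + (1-t) * dist x₀ y₀ := by
    have := mul_nonneg ht0.le hd₁
    have := mul_nonneg (by linarith : (0:ℝ) ≤ 1-t) hd₀
    linarith
  have hcomb₂ : (0:ℝ) ≤ t * dist x₀ y₀ + (1-t) * dist x₁ y₁ := by
    have := mul_nonneg ht0.le hd₀
    have := mul_nonneg (by linarith : (0:ℝ) ≤ 1-t) hd₁
    linarith
  have hdd : dist x₀ y₀ = dist x₁ y₁ := by
    by_contra hdd
    have c1 : h (dist x₁ y₀) ≤ h (t * dist x₁ y₁ + (1-t) * dist x₀ y₀) :=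
      hmono (mem_Ici.2 dist_nonneg) (mem_Ici.2 hcomb₁) tri₁
    have c2 : h (dist x₀ y₁) ≤ h (t * dist x₀ y₀ + (1-t) * dist x₁ y₁) :=
      hmono (mem_Ici.2 dist_nonneg) (mem_Ici.2 hcomb₂) tri₂
    have s1 := hconv.2 (mem_Ici.2 hd₁) (mem_Ici.2 hd₀) (Ne.symm hdd) ht0
      (by linarith : (0:ℝ) < 1 - t) (by ring)
    have s2 := hconv.2 (mem_Ici.2 hd₀) (mem_Ici.2 hd₁) hdd ht0
      (by linarith : (0:ℝ) < 1 - t) (by ring)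
    simp only [smul_eq_mul] at s1 s2
    linarith
  rw [← hdd] at ha₁ hb₁ tri₁ tri₂ key hcomb₁ hcomb₂
  rcases eq_or_lt_of_le hd₀ with hD0 | hD0
  · -- degenerate: all points coincide
    apply hne
    have e1 : x₀ = z₀ := dist_eq_zero.1 (by rw [ha₀, ← hD0]; ring)
    have e2 : z₀ = y₀ := dist_eq_zero.1 (by rw [hb₀, ← hD0]; ring)
    have e3 : x₁ = z₀ := dist_eq_zero.1 (by rw [ha₁, ← hD0]; ring)
    have e4 : z₀ = y₁ := dist_eq_zero.1 (by rw [hb₁, ← hD0]; ring)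
    rw [e1, e3, ← e2, ← e4]
  · -- nondegenerate case
    have le1 : dist x₁ y₀ ≤ dist x₀ y₀ := by linarith
    have le2 : dist x₀ y₁ ≤ dist x₀ y₀ := by linarith
    have m1 : h (dist x₁ y₀) ≤ h (dist x₀ y₀) :=
      hmono (mem_Ici.2 dist_nonneg) (mem_Ici.2 hd₀) le1
    have m2 : h (dist x₀ y₁) ≤ h (dist x₀ y₀) :=
      hmono (mem_Ici.2 dist_nonneg) (mem_Ici.2 hd₀) le2
    have e1 : dist x₁ y₀ = dist x₀ y₀ :=
      haux _ _ dist_nonneg le1 (by linarith)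
    have e2 : dist x₀ y₁ = dist x₀ y₀ :=
      haux _ _ dist_nonneg le2 (by linarith)
    have htm : t ∈ Set.Ioo (0:ℝ) 1 := ⟨ht0, ht1⟩
    have htm' : 1 - t ∈ Set.Ioo (0:ℝ) 1 := ⟨by linarith, by linarith⟩
    -- geodesics through z₀
    obtain ⟨σ, hσ, hσ0, hσ1⟩ := hgeo x₀ z₀
    obtain ⟨τ₀, hτ₀, hτ₀0, hτ₀1⟩ := hgeo z₀ y₀
    obtain ⟨τ₁, hτ₁, hτ₁0, hτ₁1⟩ := hgeo z₀ y₁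
    have gA := geodesic_concat σ τ₀ hσ hτ₀ t (dist x₀ y₀) htm
      (by rw [hσ1, hτ₀0]) (by rw [hσ0, hσ1]; exact ha₀)
      (by rw [hτ₀0, hτ₀1]; exact hb₀) (by rw [hσ0, hτ₀1])
    have gB := geodesic_concat σ τ₁ hσ hτ₁ t (dist x₀ y₀) htm
      (by rw [hσ1, hτ₁0]) (by rw [hσ0, hσ1]; exact ha₀)
      (by rw [hτ₁0, hτ₁1]; exact hb₁) (by rw [hσ0, hτ₁1]; exact e2)
    have hyeq : y₀ = y₁ := by
      have hagree : ∀ s ∈ Set.Icc (0:ℝ) t,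
          (fun s => if s ≤ t then σ (s / t) else τ₀ ((s - t) / (1 - t))) s =
          (fun s => if s ≤ t then σ (s / t) else τ₁ ((s - t) / (1 - t))) s := by
        intro s hs
        simp only [if_pos hs.2]
      have := hnb _ _ gA gB t htm hagree 1 ⟨zero_le_one, le_refl 1⟩
      simp only [if_neg (not_le.2 ht1),
        div_self (ne_of_gt (by linarith : (0:ℝ) < 1 - t))] at this
      rw [hτ₀1, hτ₁1] at this
      exact this
    -- geodesics from y₀ through z₀
    obtain ⟨ρ, hρ, hρ0, hρ1⟩ := hgeo y₀ z₀
    obtain ⟨π₀, hπ₀, hπ₀0, hπ₀1⟩ := hgeo z₀ x₀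
    obtain ⟨π₁, hπ₁, hπ₁0, hπ₁1⟩ := hgeo z₀ x₁
    have gC := geodesic_concat ρ π₀ hρ hπ₀ (1-t) (dist x₀ y₀) htm'
      (by rw [hρ1, hπ₀0]) (by rw [hρ0, hρ1, dist_comm]; exact hb₀)
      (by rw [hπ₀0, hπ₀1, dist_comm, ha₀]; ring) (by rw [hρ0, hπ₀1, dist_comm])
    have gD := geodesic_concat ρ π₁ hρ hπ₁ (1-t) (dist x₀ y₀) htm'
      (by rw [hρ1, hπ₁0]) (by rw [hρ0, hρ1, dist_comm]; exact hb₀)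
      (by rw [hπ₁0, hπ₁1, dist_comm, ha₁]; ring) (by rw [hρ0, hπ₁1, dist_comm]; exact e1)
    have hxeq : x₀ = x₁ := by
      have hagree : ∀ s ∈ Set.Icc (0:ℝ) (1-t),
          (fun s => if s ≤ 1-t then ρ (s / (1-t)) else π₀ ((s - (1-t)) / (1 - (1-t)))) s =
          (fun s => if s ≤ 1-t then ρ (s / (1-t)) else π₁ ((s - (1-t)) / (1 - (1-t)))) s := by
        intro s hs
        simp only [if_pos hs.2]
      have := hnb _ _ gC gD (1-t) htm' hagree 1 ⟨zero_le_one, le_refl 1⟩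
      simp only [if_neg (not_le.2 (by linarith : 1 - t < 1)),
        div_self (ne_of_gt (by linarith : (0:ℝ) < 1 - (1 - t)))] at this
      rw [hπ₀1, hπ₁1] at this
      exact this
    exact hne (by rw [hxeq, hyeq])
end

section
/- Let (X,d) be a metric space, h:[0,∞)→[0,∞) strictly convex and non-decreasing, and t∈(0,1). Suppose x₀,y₀,x₁,y₁∈X satisfy d(x₀,y₀)≠d(x₁,y₁) and some point z∈X is simultaneously a t-intermediate point of (x₀,y₀) and a t-intermediate point of (x₁,y₁). Then h(d(x₀,y₁))+h(d(x₁,y₀)) < h(d(x₀,y₀))+h(d(x₁,y₁)); in particular the two-point set {(x₀,y₀),(x₁,y₁)} is not c-cyclically monotone for c(x,y):=h(d(x,y)). -/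
open Set Metric

theorem crossing_different_lengths
    {X : Type*} [MetricSpace X]
    (h : ℝ → ℝ) (hconv : StrictConvexOn ℝ (Set.Ici (0:ℝ)) h)
    (hmono : MonotoneOn h (Set.Ici (0:ℝ))) (hpos : ∀ x ∈ Set.Ici (0:ℝ), 0 ≤ h x)
    (t : ℝ) (ht : t ∈ Set.Ioo (0:ℝ) 1)
    (x₀ y₀ x₁ y₁ z : X) (hlen : dist x₀ y₀ ≠ dist x₁ y₁)
    (hz₀ : IsIntermediate t x₀ y₀ z) (hz₁ : IsIntermediate t x₁ y₁ z) :
    h (dist x₀ y₁) + h (dist x₁ y₀) < h (dist x₀ y₀) + h (dist x₁ y₁) ∧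
      ¬ CyclicallyMonotone (fun x y => h (dist x y)) {(x₀, y₀), (x₁, y₁)} := by
  obtain ⟨ht0, ht1⟩ := ht
  set a := dist x₀ y₀ with ha
  set b := dist x₁ y₁ with hb
  have ha0 : (0:ℝ) ≤ a := dist_nonneg
  have hb0 : (0:ℝ) ≤ b := dist_nonneg
  have haI : a ∈ Set.Ici (0:ℝ) := ha0
  have hbI : b ∈ Set.Ici (0:ℝ) := hb0
  have ht0' : (0:ℝ) < 1 - t := by linarith
  -- triangle inequalities
  have h1 : dist x₀ y₁ ≤ t * a + (1 - t) * b := by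
    calc dist x₀ y₁ ≤ dist x₀ z + dist z y₁ := dist_triangle _ _ _
    _ = t * a + (1 - t) * b := by rw [hz₀.1, hz₁.2]
  have h2 : dist x₁ y₀ ≤ t * b + (1 - t) * a := by
    calc dist x₁ y₀ ≤ dist x₁ z + dist z y₀ := dist_triangle _ _ _
    _ = t * b + (1 - t) * a := by rw [hz₁.1, hz₀.2]
  have hmix1 : (0:ℝ) ≤ t * a + (1 - t) * b := by positivity
  have hmix2 : (0:ℝ) ≤ t * b + (1 - t) * a := by positivity
  have hc1 : h (t * a + (1 - t) * b) < t * h a + (1 - t) * h b := by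
    have := hconv.2 haI hbI hlen ht0 ht0' (by ring)
    simpa using this
  have hc2 : h (t * b + (1 - t) * a) < t * h b + (1 - t) * h a := by
    have := hconv.2 hbI haI (Ne.symm hlen) ht0 ht0' (by ring)
    simpa using this
  have key : h (dist x₀ y₁) + h (dist x₁ y₀) < h a + h b := by
    have e1 : h (dist x₀ y₁) ≤ h (t * a + (1 - t) * b) :=
      hmono dist_nonneg hmix1 h1
    have e2 : h (dist x₁ y₀) ≤ h (t * b + (1 - t) * a) :=
      hmono dist_nonneg hmix2 h2
    calc h (dist x₀ y₁) + h (dist x₁ y₀)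
        ≤ h (t * a + (1 - t) * b) + h (t * b + (1 - t) * a) := by linarith
      _ < (t * h a + (1 - t) * h b) + (t * h b + (1 - t) * h a) := by linarith
      _ = h a + h b := by ring
  refine ⟨key, fun hcm => ?_⟩
  have := hcm 1 ![(x₀, y₀), (x₁, y₁)] (by
    intro i
    fin_cases i <;> simp)
  rw [Fin.sum_univ_two, Fin.sum_univ_two] at this
  simp only [Matrix.cons_val_zero, Matrix.cons_val_one, Matrix.head_cons] at this
  simp only [show (1:Fin 2)+1 = 0 from rfl, show (0:Fin 2)+1 = 1 from rfl,
    Matrix.cons_val_zero, Matrix.cons_val_one, Matrix.head_cons] at this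
  linarith
end

section
/- Let (X,d) be a non-branching metric space and h:[0,∞)→[0,∞) strictly convex and non-decreasing, c(x,y):=h(d(x,y)). Let γ⁰,γ¹ be geodesics with equal lengths d(γ⁰_0,γ⁰_1)=d(γ¹_0,γ¹_1)>0 such that γ⁰_t=γ¹_t for some t∈(0,1). If c(γ⁰_0,γ⁰_1)+c(γ¹_0,γ¹_1) ≤ c(γ⁰_0,γ¹_1)+c(γ¹_0,γ⁰_1) (two-point c-cyclical monotonicity), then γ⁰=γ¹; in particular the curve γ defined by γ_s:=γ⁰_s for s∈[0,t] and γ_s:=γ¹_s for s∈[t,1] is a geodesic coinciding with γ⁰. -/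
open Set Metric

lemma geodesic_rev {X : Type*} [MetricSpace X] {γ : ℝ → X} (hg : IsGeodesic γ) :
    IsGeodesic (fun s => γ (1 - s)) := by
  intro s hs u hu
  have h1 : (1:ℝ) - s ∈ Set.Icc (0:ℝ) 1 := ⟨by linarith [hs.2], by linarith [hs.1]⟩
  have h2 : (1:ℝ) - u ∈ Set.Icc (0:ℝ) 1 := ⟨by linarith [hu.2], by linarith [hu.1]⟩
  have key := hg _ h1 _ h2
  simp only
  rw [key]
  rw [show (1:ℝ) - 0 = 1 by norm_num, show (1:ℝ) - 1 = 0 by norm_num,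
    dist_comm (γ 1) (γ 0), show (1 - s) - (1 - u) = -(s - u) by ring, abs_neg]

lemma concat_geodesic {X : Type*} [MetricSpace X] {γ₀ γ₁ : ℝ → X}
    (hg₀ : IsGeodesic γ₀) (hg₁ : IsGeodesic γ₁)
    (hlen : dist (γ₀ 0) (γ₀ 1) = dist (γ₁ 0) (γ₁ 1))
    {t : ℝ} (ht : t ∈ Set.Ioo (0:ℝ) 1) (hmeet : γ₀ t = γ₁ t)
    (hfar : dist (γ₀ 0) (γ₁ 1) = dist (γ₀ 0) (γ₀ 1)) :
    IsGeodesic (fun s => if s ≤ t then γ₀ s else γ₁ s) := by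
  have htI : t ∈ Set.Icc (0:ℝ) 1 := ⟨ht.1.le, ht.2.le⟩
  have h0 : (0:ℝ) ∈ Set.Icc (0:ℝ) 1 := by constructor <;> norm_num
  have h1 : (1:ℝ) ∈ Set.Icc (0:ℝ) 1 := by constructor <;> norm_num
  have key : ∀ s ∈ Set.Icc (0:ℝ) 1, ∀ u ∈ Set.Icc (0:ℝ) 1, s ≤ t → t ≤ u →
      dist (γ₀ s) (γ₁ u) = (u - s) * dist (γ₀ 0) (γ₀ 1) := by
    intro s hs u hu hst htu
    have e1 : dist (γ₀ s) (γ₀ t) = (t - s) * dist (γ₀ 0) (γ₀ 1) := by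
      rw [hg₀ s hs t htI, abs_of_nonpos (by linarith)]; ring
    have e2 : dist (γ₁ t) (γ₁ u) = (u - t) * dist (γ₀ 0) (γ₀ 1) := by
      rw [hg₁ t htI u hu, abs_of_nonpos (by linarith), hlen]; ring
    have e3 : dist (γ₀ 0) (γ₀ s) = s * dist (γ₀ 0) (γ₀ 1) := by
      rw [hg₀ 0 h0 s hs, abs_of_nonpos (by linarith [hs.1])]; ring
    have e4 : dist (γ₁ u) (γ₁ 1) = (1 - u) * dist (γ₀ 0) (γ₀ 1) := by
      rw [hg₁ u hu 1 h1, abs_of_nonpos (by linarith [hu.2]), hlen]; ring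
    have hle : dist (γ₀ s) (γ₁ u) ≤ (u - s) * dist (γ₀ 0) (γ₀ 1) := by
      calc dist (γ₀ s) (γ₁ u) ≤ dist (γ₀ s) (γ₀ t) + dist (γ₀ t) (γ₁ u) := dist_triangle _ _ _
        _ = (t - s) * dist (γ₀ 0) (γ₀ 1) + (u - t) * dist (γ₀ 0) (γ₀ 1) := by
            rw [e1, hmeet, e2]
        _ = (u - s) * dist (γ₀ 0) (γ₀ 1) := by ring
    have hge : (u - s) * dist (γ₀ 0) (γ₀ 1) ≤ dist (γ₀ s) (γ₁ u) := by
      have := dist_triangle4 (γ₀ 0) (γ₀ s) (γ₁ u) (γ₁ 1)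
      rw [e3, e4, hfar] at this
      linarith
    linarith
  intro s hs u hu
  have hend : dist ((fun s => if s ≤ t then γ₀ s else γ₁ s) 0)
      ((fun s => if s ≤ t then γ₀ s else γ₁ s) 1) = dist (γ₀ 0) (γ₀ 1) := by
    simp only [if_pos ht.1.le, if_neg (not_le.2 ht.2)]
    exact hfar
  simp only at hend ⊢
  rw [hend]
  by_cases hst : s ≤ t <;> by_cases hut : u ≤ t
  · rw [if_pos hst, if_pos hut, hg₀ s hs u hu]
  · rw [if_pos hst, if_neg hut, key s hs u hu hst (le_of_not_ge hut),
      abs_of_nonpos (by linarith [le_of_not_ge hut])]; ring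
  · rw [if_neg hst, if_pos hut, dist_comm, key u hu s hs hut (le_of_not_ge hst),
      abs_of_nonneg (by linarith [le_of_not_ge hst])]
  · rw [if_neg hst, if_neg hut, hg₁ s hs u hu, ← hlen]

lemma eq_of_mono_strictConvex {h : ℝ → ℝ} (hconv : StrictConvexOn ℝ (Set.Ici (0:ℝ)) h)
    (hmono : MonotoneOn h (Set.Ici (0:ℝ))) {a D : ℝ} (ha : 0 ≤ a)
    (hle : a ≤ D) (heq : h D ≤ h a) : a = D := by
  by_contra hne
  have hD : (0:ℝ) ≤ D := le_trans ha hle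
  have key := hconv.2 (Set.mem_Ici.2 ha) (Set.mem_Ici.2 hD) hne
    (by norm_num : (0:ℝ) < 1/2) (by norm_num : (0:ℝ) < 1/2) (by norm_num)
  simp only [smul_eq_mul] at key
  have hm0 : (0:ℝ) ≤ 1/2 * a + 1/2 * D := by linarith
  have h1 : h a ≤ h (1/2 * a + 1/2 * D) := hmono ha hm0 (by linarith)
  have h2 : h (1/2 * a + 1/2 * D) ≤ h D := hmono hm0 hD (by linarith)
  linarith

theorem crossing_equal_lengths
    {X : Type*} [MetricSpace X] (hnb : NonBranching X)
    (h : ℝ → ℝ) (hconv : StrictConvexOn ℝ (Set.Ici (0:ℝ)) h)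
    (hmono : MonotoneOn h (Set.Ici (0:ℝ))) (hpos : ∀ x ∈ Set.Ici (0:ℝ), 0 ≤ h x)
    (γ₀ γ₁ : ℝ → X) (hg₀ : IsGeodesic γ₀) (hg₁ : IsGeodesic γ₁)
    (hlen : dist (γ₀ 0) (γ₀ 1) = dist (γ₁ 0) (γ₁ 1))
    (hposlen : 0 < dist (γ₀ 0) (γ₀ 1))
    (t : ℝ) (ht : t ∈ Set.Ioo (0:ℝ) 1) (hmeet : γ₀ t = γ₁ t)
    (hmon : h (dist (γ₀ 0) (γ₀ 1)) + h (dist (γ₁ 0) (γ₁ 1)) ≤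
      h (dist (γ₀ 0) (γ₁ 1)) + h (dist (γ₁ 0) (γ₀ 1))) :
    (∀ s ∈ Set.Icc (0:ℝ) 1, γ₀ s = γ₁ s) ∧
      IsGeodesic (fun s => if s ≤ t then γ₀ s else γ₁ s) ∧
      (∀ s ∈ Set.Icc (0:ℝ) 1, (if s ≤ t then γ₀ s else γ₁ s) = γ₀ s) := by
  have htI : t ∈ Set.Icc (0:ℝ) 1 := ⟨ht.1.le, ht.2.le⟩
  have h0 : (0:ℝ) ∈ Set.Icc (0:ℝ) 1 := by constructor <;> norm_num
  have h1 : (1:ℝ) ∈ Set.Icc (0:ℝ) 1 := by constructor <;> norm_num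
  have e01 : dist (γ₀ 0) (γ₀ t) = t * dist (γ₀ 0) (γ₀ 1) := by
    rw [hg₀ 0 h0 t htI, abs_of_nonpos (by linarith [ht.1])]; ring
  have e02 : dist (γ₁ t) (γ₁ 1) = (1 - t) * dist (γ₀ 0) (γ₀ 1) := by
    rw [hg₁ t htI 1 h1, abs_of_nonpos (by linarith [ht.2]), hlen]; ring
  have e11 : dist (γ₁ 0) (γ₁ t) = t * dist (γ₀ 0) (γ₀ 1) := by
    rw [hg₁ 0 h0 t htI, abs_of_nonpos (by linarith [ht.1]), hlen]; ring
  have e12 : dist (γ₀ t) (γ₀ 1) = (1 - t) * dist (γ₀ 0) (γ₀ 1) := by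
    rw [hg₀ t htI 1 h1, abs_of_nonpos (by linarith [ht.2])]; ring
  have ha_le : dist (γ₀ 0) (γ₁ 1) ≤ dist (γ₀ 0) (γ₀ 1) := by
    calc dist (γ₀ 0) (γ₁ 1) ≤ dist (γ₀ 0) (γ₀ t) + dist (γ₀ t) (γ₁ 1) := dist_triangle _ _ _
      _ = t * dist (γ₀ 0) (γ₀ 1) + (1 - t) * dist (γ₀ 0) (γ₀ 1) := by rw [e01, hmeet, e02]
      _ = dist (γ₀ 0) (γ₀ 1) := by ring
  have hb_le : dist (γ₁ 0) (γ₀ 1) ≤ dist (γ₀ 0) (γ₀ 1) := by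
    calc dist (γ₁ 0) (γ₀ 1) ≤ dist (γ₁ 0) (γ₁ t) + dist (γ₁ t) (γ₀ 1) := dist_triangle _ _ _
      _ = t * dist (γ₀ 0) (γ₀ 1) + (1 - t) * dist (γ₀ 0) (γ₀ 1) := by rw [e11, ← hmeet, e12]
      _ = dist (γ₀ 0) (γ₀ 1) := by ring
  have hmon' : h (dist (γ₀ 0) (γ₀ 1)) + h (dist (γ₀ 0) (γ₀ 1)) ≤
      h (dist (γ₀ 0) (γ₁ 1)) + h (dist (γ₁ 0) (γ₀ 1)) := by
    rw [← hlen] at hmon; linarith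
  have hDnn : (0:ℝ) ≤ dist (γ₀ 0) (γ₀ 1) := hposlen.le
  have hha : h (dist (γ₀ 0) (γ₁ 1)) ≤ h (dist (γ₀ 0) (γ₀ 1)) :=
    hmono (Set.mem_Ici.2 dist_nonneg) (Set.mem_Ici.2 hDnn) ha_le
  have hhb : h (dist (γ₁ 0) (γ₀ 1)) ≤ h (dist (γ₀ 0) (γ₀ 1)) :=
    hmono (Set.mem_Ici.2 dist_nonneg) (Set.mem_Ici.2 hDnn) hb_le
  have hfar : dist (γ₀ 0) (γ₁ 1) = dist (γ₀ 0) (γ₀ 1) :=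
    eq_of_mono_strictConvex hconv hmono dist_nonneg ha_le (by linarith)
  have hfar' : dist (γ₁ 0) (γ₀ 1) = dist (γ₀ 0) (γ₀ 1) :=
    eq_of_mono_strictConvex hconv hmono dist_nonneg hb_le (by linarith)
  have hgc : IsGeodesic (fun s => if s ≤ t then γ₀ s else γ₁ s) :=
    concat_geodesic hg₀ hg₁ hlen ht hmeet hfar
  have hgη : IsGeodesic (fun s => if s ≤ t then γ₁ s else γ₀ s) :=
    concat_geodesic hg₁ hg₀ hlen.symm ht hmeet.symm (by rw [hfar', hlen])
  have hc_eq : ∀ s ∈ Set.Icc (0:ℝ) 1, (if s ≤ t then γ₀ s else γ₁ s) = γ₀ s := by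
    apply hnb _ _ hgc hg₀ t ht
    intro s hs
    simp only [if_pos hs.2]
  have hright : ∀ s ∈ Set.Icc (0:ℝ) 1, ¬ s ≤ t → γ₁ s = γ₀ s := by
    intro s hs hst
    have := hc_eq s hs
    rwa [if_neg hst] at this
  have hη_eq : ∀ s ∈ Set.Icc (0:ℝ) 1,
      (fun s => (fun s => if s ≤ t then γ₁ s else γ₀ s) (1 - s)) s = (fun s => γ₀ (1 - s)) s := by
    apply hnb (fun s => (fun s => if s ≤ t then γ₁ s else γ₀ s) (1 - s))
      (fun s => γ₀ (1 - s)) (geodesic_rev hgη) (geodesic_rev hg₀) (1 - t)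
      ⟨by linarith [ht.2], by linarith [ht.1]⟩
    intro s hs
    simp only
    rcases lt_or_eq_of_le hs.2 with hlt | heq
    · rw [if_neg (by simp only [not_le]; linarith : ¬ (1 - s ≤ t))]
    · rw [heq, show (1:ℝ) - (1 - t) = t by ring, if_pos le_rfl, hmeet]
  have hleft : ∀ s ∈ Set.Icc (0:ℝ) 1, s ≤ t → γ₁ s = γ₀ s := by
    intro s hs hst
    have hmem : (1:ℝ) - s ∈ Set.Icc (0:ℝ) 1 := ⟨by linarith [hs.2], by linarith [hs.1]⟩
    have key := hη_eq (1 - s) hmem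
    simp only at key
    rw [show (1:ℝ) - (1 - s) = s by ring, if_pos hst] at key
    exact key
  have hall : ∀ s ∈ Set.Icc (0:ℝ) 1, γ₀ s = γ₁ s := by
    intro s hs
    by_cases hst : s ≤ t
    · exact (hleft s hs hst).symm
    · exact (hright s hs hst).symm
  exact ⟨hall, hgc, hc_eq⟩
end

section
/- Let Λ⊂Γ be compact and let {y_i}_{i∈ℕ}⊂P₂(Λ) be dense in P₂(Λ). For n∈ℕ and i≤n define E_n(i):={x∈P₁(Λ) : c(x,y_i)−φ^c(y_i) ≤ c(x,y_j)−φ^c(y_j) for all j=1,…,n} and Λ_n:=⋃_{i=1}^n E_n(i)×{y_i}. Then Λ_n is c-cyclically monotone and P₁(Λ_n)=P₁(Λ). -/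
open Set Metric

/-- The contact set `Γ = {(x,y) ∈ K × K : φ(x) + φᶜ(y) = c(x,y)}` of a pair of
Kantorovich potentials for the cost `c(x,y) = h(d(x,y))`. -/
def contactSet {X : Type*} [MetricSpace X] (h : ℝ → ℝ) (φ φc : X → ℝ) (K : Set X) :
    Set (X × X) :=
  {p | p.1 ∈ K ∧ p.2 ∈ K ∧ φ p.1 + φc p.2 = h (dist p.1 p.2)}

/-- The set `E_n(i) = {x ∈ P₁(Λ) : c(x,y_i) - φᶜ(y_i) ≤ c(x,y_j) - φᶜ(y_j), j = 1,…,n}`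
(here indices run over `0,…,n-1`). -/
def En {X : Type*} [MetricSpace X] (h : ℝ → ℝ) (φc : X → ℝ) (Λ : Set (X × X))
    (y : ℕ → X) (n i : ℕ) : Set X :=
  {x ∈ Prod.fst '' Λ |
    ∀ j < n, h (dist x (y i)) - φc (y i) ≤ h (dist x (y j)) - φc (y j)}

/-- The approximating set `Λ_n = ⋃_{i<n} E_n(i) × {y_i}`. -/
def Λn {X : Type*} [MetricSpace X] (h : ℝ → ℝ) (φc : X → ℝ) (Λ : Set (X × X))
    (y : ℕ → X) (n : ℕ) : Set (X × X) :=
  ⋃ i < n, En h φc Λ y n i ×ˢ ({y i} : Set X)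

theorem approximating_sets_cyclically_monotone
    {X : Type*} [MetricSpace X] [CompleteSpace X] [TopologicalSpace.SeparableSpace X]
    (h : ℝ → ℝ) (hconv : StrictConvexOn ℝ (Set.Ici (0:ℝ)) h)
    (hmono : MonotoneOn h (Set.Ici (0:ℝ))) (hpos : ∀ x ∈ Set.Ici (0:ℝ), 0 ≤ h x)
    (K : Set X) (hK : IsCompact K)
    (φ φc : X → ℝ) (hφ : ContinuousOn φ K) (hφc : ContinuousOn φc K)
    (hpot : ∀ x ∈ K, ∀ y ∈ K, φ x + φc y ≤ h (dist x y))
    (Λ : Set (X × X)) (hΛcpt : IsCompact Λ) (hΛΓ : Λ ⊆ contactSet h φ φc K)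
    (y : ℕ → X) (hyin : ∀ i, y i ∈ Prod.snd '' Λ)
    (hydense : Prod.snd '' Λ ⊆ closure (Set.range y))
    (n : ℕ) (hn : 1 ≤ n) :
    CyclicallyMonotone (fun a b => h (dist a b)) (Λn h φc Λ y n) ∧
      Prod.fst '' Λn h φc Λ y n = Prod.fst '' Λ := by
  constructor
  · intro N p hp
    have hmem : ∀ i : Fin (N + 1), ∃ j, j < n ∧ (p i).1 ∈ En h φc Λ y n j ∧ (p i).2 = y j := by
      intro i
      have := hp i
      simp only [Λn, mem_iUnion, mem_prod, mem_singleton_iff] at this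
      obtain ⟨j, hj, h1, h2⟩ := this
      exact ⟨j, hj, h1, h2⟩
    choose k hk h1 h2 using hmem
    set F : Fin (N + 1) → ℝ := fun i => h (dist (p i).1 (y (k i))) - φc (y (k i)) with hF
    have key : ∀ i : Fin (N + 1),
        h (dist (p i).1 (p i).2) + F (i + 1) ≤ h (dist (p (i + 1)).1 (p i).2) + F i := by
      intro i
      rw [h2 i]
      have e2 : h (dist (p (i + 1)).1 (y (k (i + 1)))) - φc (y (k (i + 1)))
          ≤ h (dist (p (i + 1)).1 (y (k i))) - φc (y (k i)) :=
        (h1 (i + 1)).2 (k i) (hk i)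
      simp only [hF]
      linarith
    have hsum : ∑ i, F (i + 1) = ∑ i, F i := Equiv.sum_comp (Equiv.addRight 1) F
    have := Finset.sum_le_sum (fun i (_ : i ∈ Finset.univ) => key i)
    rw [Finset.sum_add_distrib, Finset.sum_add_distrib, hsum] at this
    linarith
  · apply Set.eq_of_subset_of_subset
    · rintro x ⟨q, hq, rfl⟩
      simp only [Λn, mem_iUnion, mem_prod, mem_singleton_iff] at hq
      obtain ⟨j, hj, h1, _⟩ := hq
      exact h1.1
    · rintro x ⟨q, hq, rfl⟩
      have hne : (Finset.range n).Nonempty := ⟨0, Finset.mem_range.2 hn⟩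
      obtain ⟨i, hi, hmin⟩ := Finset.exists_min_image (Finset.range n)
        (fun j => h (dist q.1 (y j)) - φc (y j)) hne
      refine ⟨(q.1, y i), ?_, rfl⟩
      simp only [Λn, mem_iUnion, mem_prod, mem_singleton_iff]
      exact ⟨i, Finset.mem_range.1 hi,
        ⟨⟨q, hq, rfl⟩, fun j hj => hmin j (Finset.mem_range.2 hj)⟩, rfl⟩
end

section
/- Assume (X,d) is a proper, geodesic, non-branching complete separable metric space and that the Borel measure m satisfies the evolution estimate with rate f. Let Λ⊂Γ be compact, {y_i}_{i∈ℕ}⊂P₂(Λ) dense, and for n∈ℕ set E_n(i):={x∈P₁(Λ) : c(x,y_i)−φ^c(y_i) ≤ c(x,y_j)−φ^c(y_j), j=1,…,n} and Λ_n:=⋃_{i=1}^n E_n(i)×{y_i}. Then for every compact A⊂P₁(Λ) and every t∈[0,1), m(A_{t,Λ_n}) ≥ f(t)·m(A). -/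
open Set Metric MeasureTheory
open scoped ENNReal NNReal

/-- The evolution set `A_{t,Λ} = {γ_t : γ geodesic, γ_0 ∈ A, (γ_0,γ_1) ∈ Λ}`. -/
def evoSet {X : Type*} [MetricSpace X] (A : Set X) (Λ : Set (X × X)) (t : ℝ) : Set X :=
  {z | ∃ γ : ℝ → X, IsGeodesic γ ∧ γ 0 ∈ A ∧ (γ 0, γ 1) ∈ Λ ∧ γ t = z}

/-- `m` satisfies the evolution estimate with rate `f` (a consequence of `MCP(K,N)`):
`f : [0,1] → [0,1]` is continuous, `f(0) = 1`, and `m(E_{t,E×{y}}) ≥ f(t)·m(E)` for every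
compact `E`, every `y` and every `t ∈ [0,1]`. -/
def EvolutionEstimate {X : Type*} [MetricSpace X] [MeasurableSpace X]
    (m : Measure X) (f : ℝ → ℝ) : Prop :=
  ContinuousOn f (Set.Icc 0 1) ∧ f 0 = 1 ∧
    (∀ t ∈ Set.Icc (0:ℝ) 1, f t ∈ Set.Icc (0:ℝ) 1) ∧
    ∀ E : Set X, IsCompact E → ∀ y : X, ∀ t ∈ Set.Icc (0:ℝ) 1,
      ENNReal.ofReal (f t) * m E ≤ m (evoSet E (E ×ˢ ({y} : Set X)) t)

section Aux
def midSet {X : Type*} [MetricSpace X] (A : Set X) (y : X) (t : ℝ) : Set X :=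
  {z | ∃ x ∈ A, dist x z = t * dist x y ∧ dist z y = (1 - t) * dist x y}

lemma strictMonoOn_of_strictConvex (h : ℝ → ℝ) (hconv : StrictConvexOn ℝ (Set.Ici (0:ℝ)) h)
    (hmono : MonotoneOn h (Set.Ici (0:ℝ))) : StrictMonoOn h (Set.Ici (0:ℝ)) := by
  intro u hu v hv huv
  rcases lt_or_eq_of_le (hmono hu hv huv.le) with h1 | h1
  · exact h1
  exfalso
  have hmid : (1/2 : ℝ) • u + (1/2 : ℝ) • v ∈ Set.Ici (0:ℝ) := by
    simp only [smul_eq_mul, Set.mem_Ici] at *; linarith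
  have := hconv.2 hu hv (ne_of_lt huv) (by norm_num : (0:ℝ) < 1/2) (by norm_num : (0:ℝ) < 1/2)
      (by norm_num)
  have hle := hmono hu hmid (by simp only [smul_eq_mul] at *; simp only [Set.mem_Ici] at hu hv; linarith)
  simp only [smul_eq_mul] at this hle
  linarith


lemma geodesic_dist0 {X : Type*} [MetricSpace X] {γ : ℝ → X} (hγ : IsGeodesic γ)
    {t : ℝ} (ht : t ∈ Set.Icc (0:ℝ) 1) : dist (γ 0) (γ t) = t * dist (γ 0) (γ 1) := by
  have := hγ 0 (by constructor <;> norm_num) t ht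
  rwa [abs_of_nonpos (by linarith [ht.1]), neg_sub, sub_zero] at this


lemma geodesic_dist1 {X : Type*} [MetricSpace X] {γ : ℝ → X} (hγ : IsGeodesic γ)
    {t : ℝ} (ht : t ∈ Set.Icc (0:ℝ) 1) : dist (γ t) (γ 1) = (1 - t) * dist (γ 0) (γ 1) := by
  have := hγ t ht 1 (by constructor <;> norm_num)
  rwa [abs_of_nonpos (by linarith [ht.2]), neg_sub] at this


lemma geodesic_reverse {X : Type*} [MetricSpace X] {γ : ℝ → X} (hγ : IsGeodesic γ) :
    IsGeodesic (fun s => γ (1 - s)) := by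
  intro s hs t ht
  have h1 : (1:ℝ) - s ∈ Set.Icc (0:ℝ) 1 := ⟨by linarith [hs.2], by linarith [hs.1]⟩
  have h2 : (1:ℝ) - t ∈ Set.Icc (0:ℝ) 1 := ⟨by linarith [ht.2], by linarith [ht.1]⟩
  show dist (γ (1-s)) (γ (1-t)) = |s - t| * dist (γ (1-0)) (γ (1-1))
  norm_num
  rw [hγ (1-s) h1 (1-t) h2, dist_comm (γ 0) (γ 1),
    show (1:ℝ)-s-(1-t) = -(s-t) by ring, abs_neg]


lemma evoSet_subset_midSet {X : Type*} [MetricSpace X] (A : Set X) (y : X) {t : ℝ}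
    (ht : t ∈ Set.Icc (0:ℝ) 1) : evoSet A (A ×ˢ ({y} : Set X)) t ⊆ midSet A y t := by
  rintro z ⟨γ, hγ, h0, hΛ, rfl⟩
  obtain ⟨-, h1⟩ := hΛ
  simp only [Set.mem_singleton_iff] at h1
  exact ⟨γ 0, h0, by rw [← h1]; exact geodesic_dist0 hγ ht,
    by rw [← h1]; exact geodesic_dist1 hγ ht⟩


lemma midSet_subset_evoSet {X : Type*} [MetricSpace X] (hgeo : GeodesicMetricSpace X)
    (A : Set X) (y : X) {t : ℝ} (ht : t ∈ Set.Ico (0:ℝ) 1) :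
    midSet A y t ⊆ evoSet A (A ×ˢ ({y} : Set X)) t := by
  rintro z ⟨x, hx, hxz, hzy⟩
  rcases eq_or_lt_of_le ht.1 with h0 | h0
  · -- t = 0
    have hz : z = x := by
      rw [← h0, zero_mul] at hxz
      exact (dist_eq_zero.mp hxz).symm
    obtain ⟨γ, hγ, hγ0, hγ1⟩ := hgeo x y
    exact ⟨γ, hγ, by rw [hγ0]; exact hx, by rw [hγ0, hγ1]; exact ⟨hx, rfl⟩,
      by rw [← h0, hγ0, hz]⟩
  · -- 0 < t < 1
    obtain ⟨α, hα, hα0, hα1⟩ := hgeo x z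
    obtain ⟨β, hβ, hβ0, hβ1⟩ := hgeo z y
    set D := dist x y with hD
    have hD0 : 0 ≤ D := dist_nonneg
    have ht1 : t < 1 := ht.2
    have ht0 : t ≠ 0 := ne_of_gt h0
    have h1tpos : (0:ℝ) < 1 - t := by linarith
    have h1t0 : (1:ℝ) - t ≠ 0 := by linarith
    -- the concatenation
    refine ⟨fun s => if s ≤ t then α (s / t) else β ((s - t) / (1 - t)), ?_, ?_, ?_, ?_⟩
    · -- IsGeodesic
      have key : ∀ s ∈ Set.Icc (0:ℝ) 1, ∀ s' ∈ Set.Icc (0:ℝ) 1, s ≤ s' →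
          dist (if s ≤ t then α (s / t) else β ((s - t) / (1 - t)))
               (if s' ≤ t then α (s' / t) else β ((s' - t) / (1 - t))) = (s' - s) * D := by
        intro s hs s' hs' hss
        have hmem : ∀ u : ℝ, 0 ≤ u → u ≤ t → u / t ∈ Set.Icc (0:ℝ) 1 :=
          fun u h1 h2 => ⟨div_nonneg h1 h0.le, (div_le_one h0).mpr h2⟩
        have hmem' : ∀ u : ℝ, t ≤ u → u ≤ 1 → (u - t) / (1 - t) ∈ Set.Icc (0:ℝ) 1 :=
          fun u h1 h2 => ⟨div_nonneg (by linarith) (by linarith),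
            (div_le_one (by linarith)).mpr (by linarith)⟩
        have hαd : dist (α 0) (α 1) = t * D := by
          rw [hα0, hα1, hD]; exact hxz
        have hβd : dist (β 0) (β 1) = (1 - t) * D := by
          rw [hβ0, hβ1, hD]; exact hzy
        by_cases c1 : s ≤ t <;> by_cases c2 : s' ≤ t
        · simp only [if_pos c1, if_pos c2]
          rw [hα (s/t) (hmem s hs.1 c1) (s'/t) (hmem s' hs'.1 c2), hαd,
            abs_of_nonpos (by rw [sub_nonpos]; gcongr)]
          field_simp [ht0, h1t0]
          ring
        · -- s ≤ t < s'
          simp only [if_pos c1, if_neg c2]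
          push_neg at c2
          have d1 : dist (α (s/t)) (α 1) = (t - s) * D := by
            rw [hα (s/t) (hmem s hs.1 c1) 1 ⟨zero_le_one, le_refl 1⟩, hαd,
              abs_of_nonpos (by rw [sub_nonpos, div_le_one h0]; exact c1)]
            field_simp [ht0, h1t0]; ring
          have d2 : dist (β 0) (β ((s'-t)/(1-t))) = (s' - t) * D := by
            rw [hβ 0 ⟨le_refl 0, zero_le_one⟩ ((s'-t)/(1-t)) (hmem' s' c2.le hs'.2), hβd,
              abs_of_nonpos (by simp only [zero_sub, neg_nonpos]; exact div_nonneg (by linarith) (by linarith))]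
            field_simp [ht0, h1t0]; ring
          have dup : dist (α (s/t)) (β ((s'-t)/(1-t))) ≤ (s' - s) * D := by
            calc dist (α (s/t)) (β ((s'-t)/(1-t)))
                ≤ dist (α (s/t)) (α 1) + dist (β 0) (β ((s'-t)/(1-t))) := by
                  rw [hα1, ← hβ0]; exact dist_triangle _ _ _
              _ = (s' - s) * D := by rw [d1, d2]; ring
          have d3 : dist (α 0) (α (s/t)) = s * D := by
            rw [hα 0 ⟨le_refl 0, zero_le_one⟩ (s/t) (hmem s hs.1 c1), hαd,
              abs_of_nonpos (by simp only [zero_sub, neg_nonpos]; exact div_nonneg hs.1 h0.le)]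
            field_simp [ht0, h1t0]; ring
          have d4 : dist (β ((s'-t)/(1-t))) (β 1) = (1 - s') * D := by
            rw [hβ ((s'-t)/(1-t)) (hmem' s' c2.le hs'.2) 1 ⟨zero_le_one, le_refl 1⟩, hβd,
              abs_of_nonpos (by rw [sub_nonpos, div_le_one (by linarith)]; linarith [hs'.2])]
            field_simp [ht0, h1t0]; ring
          have dlow : D ≤ s * D + dist (α (s/t)) (β ((s'-t)/(1-t))) + (1 - s') * D := by
            calc D = dist x y := hD
              _ ≤ dist x (α (s/t)) + dist (α (s/t)) (β ((s'-t)/(1-t))) + dist (β ((s'-t)/(1-t))) y :=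
                dist_triangle4 _ _ _ _
              _ = s * D + dist (α (s/t)) (β ((s'-t)/(1-t))) + (1 - s') * D := by
                rw [← hα0, ← hβ1, d3, d4]
          linarith [dup, dlow]
        · linarith
        · simp only [if_neg c1, if_neg c2]
          push_neg at c1
          rw [hβ ((s-t)/(1-t)) (hmem' s c1.le hs.2) ((s'-t)/(1-t)) (hmem' s' (by linarith) hs'.2), hβd,
            abs_of_nonpos (by rw [sub_nonpos]; gcongr <;> linarith)]
          field_simp [h1t0]
          ring
      intro s hs s' hs'
      have e01 : dist (if (0:ℝ) ≤ t then α (0 / t) else β ((0 - t) / (1 - t)))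
               (if (1:ℝ) ≤ t then α (1 / t) else β ((1 - t) / (1 - t))) = (1 - 0) * D :=
        key 0 ⟨le_refl 0, zero_le_one⟩ 1 ⟨zero_le_one, le_refl 1⟩ zero_le_one
      rcases le_total s s' with hss | hss
      · rw [key s hs s' hs' hss, e01, abs_of_nonpos (by linarith)]
        ring
      · rw [dist_comm, key s' hs' s hs hss, e01, abs_of_nonneg (by linarith)]
        ring
    · simp only [if_pos ht.1, zero_div, hα0]; exact hx
    · have e1 : ¬ ((1:ℝ) ≤ t) := by linarith
      simp only [if_pos ht.1, if_neg e1, zero_div, hα0, div_self (show (1:ℝ) - t ≠ 0 by linarith), hβ1]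
      exact ⟨hx, rfl⟩
    · simp only [if_pos (le_refl t), div_self (ne_of_gt h0), hα1]


lemma isCompact_midSet {X : Type*} [MetricSpace X] [ProperSpace X]
    (K : Set X) (hK : IsCompact K) (y : X) {t : ℝ} (ht : t ∈ Set.Icc (0:ℝ) 1) :
    IsCompact (midSet K y t) := by
  obtain ⟨R, hR⟩ := hK.isBounded.subset_closedBall y
  have hsub : midSet K y t ⊆ closedBall y (max R 0) := by
    rintro z ⟨x, hx, hxz, hzy⟩
    have hxy : dist x y ≤ max R 0 := le_trans (hR hx) (le_max_left _ _)
    have : dist z y ≤ dist x y := by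
      rw [hzy]
      nlinarith [dist_nonneg (x := x) (y := y), ht.1, ht.2]
    exact mem_closedBall.mpr (le_trans this hxy)
  set S : Set (X × X) := {p | p.1 ∈ K ∧ p.2 ∈ closedBall y (max R 0) ∧
    dist p.1 p.2 = t * dist p.1 y ∧ dist p.2 y = (1 - t) * dist p.1 y} with hS
  have hScpt : IsCompact S := by
    have h1 : IsCompact (K ×ˢ closedBall y (max R 0)) :=
      hK.prod (isCompact_closedBall y _)
    apply h1.of_isClosed_subset
    · apply IsClosed.inter
      · exact IsClosed.preimage continuous_fst hK.isClosed
      apply IsClosed.inter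
      · exact IsClosed.preimage continuous_snd isClosed_closedBall
      apply IsClosed.inter
      · exact isClosed_eq (continuous_fst.dist continuous_snd)
          (continuous_const.mul (continuous_fst.dist continuous_const))
      · exact isClosed_eq (continuous_snd.dist continuous_const)
          (continuous_const.mul (continuous_fst.dist continuous_const))
    · rintro ⟨a, b⟩ ⟨h1, h2, -⟩
      exact ⟨h1, h2⟩
  have himg : midSet K y t = Prod.snd '' S := by
    ext z
    constructor
    · rintro ⟨x, hx, hxz, hzy⟩
      exact ⟨(x, z), ⟨hx, hsub ⟨x, hx, hxz, hzy⟩, hxz, hzy⟩, rfl⟩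
    · rintro ⟨⟨a, b⟩, ⟨h1, h2, h3, h4⟩, rfl⟩
      exact ⟨a, h1, h3, h4⟩
  rw [himg]
  exact hScpt.image continuous_snd


lemma start_eq_of_meet {X : Type*} [MetricSpace X] (hnb : NonBranching X)
    (h : ℝ → ℝ) (hconv : StrictConvexOn ℝ (Set.Ici (0:ℝ)) h)
    (hmono : MonotoneOn h (Set.Ici (0:ℝ)))
    (φc : X → ℝ) (Λ : Set (X × X)) (y : ℕ → X) (n i j : ℕ) (hi : i < n) (hj : j < n)
    (γ σ : ℝ → X) (hγ : IsGeodesic γ) (hσ : IsGeodesic σ)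
    (hγ0 : γ 0 ∈ En h φc Λ y n i) (hσ0 : σ 0 ∈ En h φc Λ y n j)
    (hγ1 : γ 1 = y i) (hσ1 : σ 1 = y j)
    {t : ℝ} (ht : t ∈ Set.Ico (0:ℝ) 1) (hmeet : γ t = σ t) : γ 0 = σ 0 := by
  rcases eq_or_lt_of_le ht.1 with ht0 | ht0
  · subst ht0; exact hmeet
  have ht1 : t < 1 := ht.2
  have htI : t ∈ Set.Icc (0:ℝ) 1 := ⟨ht.1, ht1.le⟩
  have dγz : dist (γ 0) (γ t) = t * dist (γ 0) (γ 1) := geodesic_dist0 hγ htI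
  have dzyi : dist (γ t) (γ 1) = (1 - t) * dist (γ 0) (γ 1) := geodesic_dist1 hγ htI
  have dσz : dist (σ 0) (γ t) = t * dist (σ 0) (σ 1) := by
    rw [hmeet]; exact geodesic_dist0 hσ htI
  have dzyj : dist (γ t) (σ 1) = (1 - t) * dist (σ 0) (σ 1) := by
    rw [hmeet]; exact geodesic_dist1 hσ htI
  have hple : dist (γ 0) (σ 1) ≤ t * dist (γ 0) (γ 1) + (1 - t) * dist (σ 0) (σ 1) := by
    calc dist (γ 0) (σ 1) ≤ dist (γ 0) (γ t) + dist (γ t) (σ 1) := dist_triangle _ _ _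
      _ = _ := by rw [dγz, dzyj]
  have hqle : dist (σ 0) (γ 1) ≤ t * dist (σ 0) (σ 1) + (1 - t) * dist (γ 0) (γ 1) := by
    calc dist (σ 0) (γ 1) ≤ dist (σ 0) (γ t) + dist (γ t) (γ 1) := dist_triangle _ _ _
      _ = _ := by rw [dσz, dzyi]
  have mono1 : h (dist (γ 0) (γ 1)) - φc (γ 1) ≤ h (dist (γ 0) (σ 1)) - φc (σ 1) := by
    rw [hγ1, hσ1]; exact hγ0.2 j hj
  have mono2 : h (dist (σ 0) (σ 1)) - φc (σ 1) ≤ h (dist (σ 0) (γ 1)) - φc (γ 1) := by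
    rw [hγ1, hσ1]; exact hσ0.2 i hi
  have hsum : h (dist (γ 0) (γ 1)) + h (dist (σ 0) (σ 1))
      ≤ h (dist (γ 0) (σ 1)) + h (dist (σ 0) (γ 1)) := by linarith
  have hmix1 : (0:ℝ) ≤ t * dist (γ 0) (γ 1) + (1 - t) * dist (σ 0) (σ 1) :=
    add_nonneg (mul_nonneg ht.1 dist_nonneg) (mul_nonneg (by linarith) dist_nonneg)
  have hmix2 : (0:ℝ) ≤ t * dist (σ 0) (σ 1) + (1 - t) * dist (γ 0) (γ 1) :=
    add_nonneg (mul_nonneg ht.1 dist_nonneg) (mul_nonneg (by linarith) dist_nonneg)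
  have hhp : h (dist (γ 0) (σ 1)) ≤ h (t * dist (γ 0) (γ 1) + (1 - t) * dist (σ 0) (σ 1)) :=
    hmono dist_nonneg hmix1 hple
  have hhq : h (dist (σ 0) (γ 1)) ≤ h (t * dist (σ 0) (σ 1) + (1 - t) * dist (γ 0) (γ 1)) :=
    hmono dist_nonneg hmix2 hqle
  have hAB : dist (γ 0) (γ 1) = dist (σ 0) (σ 1) := by
    by_contra hab
    have c1 := hconv.2 (Set.mem_Ici.mpr dist_nonneg) (Set.mem_Ici.mpr dist_nonneg) hab
      ht0 (by linarith : (0:ℝ) < 1 - t) (by ring)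
    have c2 := hconv.2 (Set.mem_Ici.mpr dist_nonneg) (Set.mem_Ici.mpr dist_nonneg)
      (Ne.symm hab) ht0 (by linarith : (0:ℝ) < 1 - t) (by ring)
    simp only [smul_eq_mul] at c1 c2
    linarith
  have hhAB : h (dist (σ 0) (σ 1)) = h (dist (γ 0) (γ 1)) := by rw [hAB]
  rw [← hAB] at hple hqle
  have hPle : dist (γ 0) (σ 1) ≤ dist (γ 0) (γ 1) := by linarith
  have hQle : dist (σ 0) (γ 1) ≤ dist (γ 0) (γ 1) := by linarith
  have hhP : h (dist (γ 0) (σ 1)) ≤ h (dist (γ 0) (γ 1)) :=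
    hmono dist_nonneg dist_nonneg hPle
  have hhQ : h (dist (σ 0) (γ 1)) ≤ h (dist (γ 0) (γ 1)) :=
    hmono dist_nonneg dist_nonneg hQle
  have h3 : h (dist (γ 0) (γ 1)) ≤ h (dist (γ 0) (σ 1)) := by linarith
  have hpa : dist (γ 0) (σ 1) = dist (γ 0) (γ 1) := by
    by_contra hne
    have hlt : dist (γ 0) (σ 1) < dist (γ 0) (γ 1) := lt_of_le_of_ne hPle hne
    exact absurd h3 (not_le.mpr
      (strictMonoOn_of_strictConvex h hconv hmono dist_nonneg dist_nonneg hlt))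
  -- concatenated curve
  have key : ∀ s ∈ Set.Icc (0:ℝ) 1, ∀ s' ∈ Set.Icc (0:ℝ) 1, s ≤ s' →
      dist (if s ≤ t then γ s else σ s) (if s' ≤ t then γ s' else σ s')
        = (s' - s) * dist (γ 0) (γ 1) := by
    intro s hs s' hs' hss
    by_cases c1 : s ≤ t <;> by_cases c2 : s' ≤ t
    · simp only [if_pos c1, if_pos c2]
      rw [hγ s hs s' hs', abs_of_nonpos (by linarith)]; ring
    · push_neg at c2
      simp only [if_pos c1, if_neg (not_le.mpr c2)]
      have d1 : dist (γ s) (γ t) = (t - s) * dist (γ 0) (γ 1) := by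
        rw [hγ s hs t htI, abs_of_nonpos (by linarith)]; ring
      have d2 : dist (γ t) (σ s') = (s' - t) * dist (γ 0) (γ 1) := by
        rw [hmeet, hσ t htI s' hs', abs_of_nonpos (by linarith), ← hAB]; ring
      have d3 : dist (γ 0) (γ s) = s * dist (γ 0) (γ 1) := geodesic_dist0 hγ hs
      have d4 : dist (σ s') (σ 1) = (1 - s') * dist (γ 0) (γ 1) := by
        rw [geodesic_dist1 hσ hs', ← hAB]
      have dup : dist (γ s) (σ s') ≤ (s' - s) * dist (γ 0) (γ 1) := by
        calc dist (γ s) (σ s') ≤ dist (γ s) (γ t) + dist (γ t) (σ s') := dist_triangle _ _ _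
          _ = (s' - s) * dist (γ 0) (γ 1) := by rw [d1, d2]; ring
      have dlow : dist (γ 0) (γ 1)
          ≤ s * dist (γ 0) (γ 1) + dist (γ s) (σ s') + (1 - s') * dist (γ 0) (γ 1) := by
        calc dist (γ 0) (γ 1) = dist (γ 0) (σ 1) := hpa.symm
          _ ≤ dist (γ 0) (γ s) + dist (γ s) (σ s') + dist (σ s') (σ 1) := dist_triangle4 _ _ _ _
          _ = _ := by rw [d3, d4]
      linarith
    · linarith
    · simp only [if_neg c1, if_neg c2]
      rw [hσ s hs s' hs', abs_of_nonpos (by linarith), ← hAB]; ring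
  have hτ01 : dist (if (0:ℝ) ≤ t then γ 0 else σ 0) (if (1:ℝ) ≤ t then γ 1 else σ 1)
      = dist (γ 0) (γ 1) := by
    rw [if_pos ht.1, if_neg (by linarith : ¬ (1:ℝ) ≤ t)]
    exact hpa
  have hτ : IsGeodesic (fun s => if s ≤ t then γ s else σ s) := by
    intro s hs s' hs'
    simp only
    rw [hτ01]
    rcases le_total s s' with hss | hss
    · rw [key s hs s' hs' hss, abs_of_nonpos (by linarith)]; try ring
    · rw [dist_comm, key s' hs' s hs hss, abs_of_nonneg (by linarith)]; try ring
  have nb1 := hnb γ (fun s => if s ≤ t then γ s else σ s) hγ hτ t ⟨ht0, ht1⟩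
    (fun s hs => by simp only [if_pos hs.2])
  have hag : ∀ s, t ≤ s → s ≤ 1 → γ s = σ s := by
    intro s h1 h2
    rcases eq_or_lt_of_le h1 with rfl | hlt
    · exact hmeet
    · have := nb1 s ⟨by linarith, h2⟩
      simpa only [if_neg (not_le.mpr hlt)] using this
  have nb2 := hnb (fun s => γ (1 - s)) (fun s => σ (1 - s)) (geodesic_reverse hγ)
    (geodesic_reverse hσ) (1 - t) ⟨by linarith, by linarith⟩
    (fun s hs => hag (1 - s) (by linarith [hs.2]) (by linarith [hs.1]))
  have := nb2 1 ⟨zero_le_one, le_refl 1⟩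
  simpa using this

end Aux

theorem evolution_estimate_approximating_sets
    {X : Type*} [MetricSpace X] [ProperSpace X] [CompleteSpace X]
    [TopologicalSpace.SeparableSpace X] [MeasurableSpace X] [BorelSpace X]
    (hgeo : GeodesicMetricSpace X) (hnb : NonBranching X)
    (m : Measure X) [IsFiniteMeasureOnCompacts m]
    (f : ℝ → ℝ) (hm : EvolutionEstimate m f)
    (h : ℝ → ℝ) (hconv : StrictConvexOn ℝ (Set.Ici (0:ℝ)) h)
    (hmono : MonotoneOn h (Set.Ici (0:ℝ))) (hpos : ∀ x ∈ Set.Ici (0:ℝ), 0 ≤ h x)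
    (K : Set X) (hK : IsCompact K)
    (φ φc : X → ℝ) (hφ : ContinuousOn φ K) (hφc : ContinuousOn φc K)
    (hpot : ∀ x ∈ K, ∀ y ∈ K, φ x + φc y ≤ h (dist x y))
    (Λ : Set (X × X)) (hΛcpt : IsCompact Λ) (hΛΓ : Λ ⊆ contactSet h φ φc K)
    (y : ℕ → X) (hyin : ∀ i, y i ∈ Prod.snd '' Λ)
    (hydense : Prod.snd '' Λ ⊆ closure (Set.range y))
    (n : ℕ) (hn : 1 ≤ n)
    (A : Set X) (hA : IsCompact A) (hAsub : A ⊆ Prod.fst '' Λ)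
    (t : ℝ) (ht : t ∈ Set.Ico (0:ℝ) 1) :
    ENNReal.ofReal (f t) * m A ≤ m (evoSet A (Λn h φc Λ y n) t) := by
  classical
  obtain ⟨hfcont, hf0, hf01, hEE⟩ := hm
  have htI : t ∈ Set.Icc (0:ℝ) 1 := ⟨ht.1, ht.2.le⟩
  have hg1 : ENNReal.ofReal (f t) ≤ 1 := ENNReal.ofReal_le_one.mpr (hf01 t htI).2
  -- measurability of En sets
  have hEnMeas : ∀ i, MeasurableSet (En h φc Λ y n i) := by
    intro i
    have hH : Monotone (fun r : ℝ => h (max r 0)) := fun u v huv =>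
      hmono (Set.mem_Ici.mpr (le_max_right u 0)) (Set.mem_Ici.mpr (le_max_right v 0))
        (max_le_max huv (le_refl 0))
    have hHm : Measurable (fun r : ℝ => h (max r 0)) := hH.measurable
    have hdm : ∀ w : X, Measurable (fun x : X => h (max (dist x w) 0)) := fun w =>
      hHm.comp (Continuous.dist continuous_id continuous_const).measurable
    have heq : En h φc Λ y n i = (Prod.fst '' Λ) ∩
        ⋂ j ∈ Finset.range n,
          {x : X | h (max (dist x (y i)) 0) - φc (y i) ≤ h (max (dist x (y j)) 0) - φc (y j)} := by
      ext x
      simp only [En, Set.mem_setOf_eq, Set.mem_inter_iff, Set.mem_iInter, Finset.mem_range,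
        max_eq_left dist_nonneg]
    rw [heq]
    refine MeasurableSet.inter ((hΛcpt.image continuous_fst).isClosed.measurableSet) ?_
    refine MeasurableSet.biInter (Finset.range n).countable_toSet (fun j _ => ?_)
    exact measurableSet_le ((hdm (y i)).sub measurable_const) ((hdm (y j)).sub measurable_const)
  -- A is covered by the En sets
  have hcover : ∀ x ∈ A, ∃ i < n, x ∈ En h φc Λ y n i := by
    intro x hx
    obtain ⟨i, hi, hmin⟩ := (Finset.range n).exists_min_image
      (fun j => h (dist x (y j)) - φc (y j)) ⟨0, Finset.mem_range.mpr hn⟩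
    exact ⟨i, Finset.mem_range.mp hi,
      ⟨hAsub hx, fun j hj => hmin j (Finset.mem_range.mpr hj)⟩⟩
  -- the disjoint pieces
  set B : ℕ → Set X := fun i =>
    (A ∩ En h φc Λ y n i) \ ⋃ j ∈ Finset.range i, En h φc Λ y n j with hBdef
  have hBsubA : ∀ i, B i ⊆ A := fun i x hx => hx.1.1
  have hBsubE : ∀ i, B i ⊆ En h φc Λ y n i := fun i x hx => hx.1.2
  have hBmeas : ∀ i, MeasurableSet (B i) :=
    fun i => ((hA.measurableSet.inter (hEnMeas i)).diff
      (MeasurableSet.biUnion (Finset.range i).countable_toSet (fun j _ => hEnMeas j)))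
  have hBdisj : Set.PairwiseDisjoint (↑(Finset.range n) : Set ℕ) B := by
    intro i _ j _ hij
    rcases lt_or_gt_of_ne hij with hlt | hlt
    · refine Set.disjoint_left.mpr (fun x hxi hxj => ?_)
      exact hxj.2 (Set.mem_biUnion (Finset.mem_range.mpr hlt) (hBsubE i hxi))
    · refine Set.disjoint_left.mpr (fun x hxi hxj => ?_)
      exact hxi.2 (Set.mem_biUnion (Finset.mem_range.mpr hlt) (hBsubE j hxj))
  have hAeq : A = ⋃ i ∈ Finset.range n, B i := by
    apply Set.Subset.antisymm
    · intro x hx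
      have hex : ∃ i, x ∈ En h φc Λ y n i := by
        obtain ⟨i, _, hi⟩ := hcover x hx; exact ⟨i, hi⟩
      set i₀ := Nat.find hex with hi₀
      obtain ⟨iw, hiw, hiwE⟩ := hcover x hx
      have hi₀n : i₀ < n := lt_of_le_of_lt (Nat.find_min' hex hiwE) hiw
      refine Set.mem_biUnion (Finset.mem_range.mpr hi₀n) ?_
      refine ⟨⟨hx, Nat.find_spec hex⟩, ?_⟩
      intro hmem
      obtain ⟨j, hj, hjE⟩ := by
        simpa only [Set.mem_iUnion, Finset.mem_range, exists_prop] using hmem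
      exact Nat.find_min hex hj hjE
    · exact Set.iUnion₂_subset fun i _ => hBsubA i
  have hmB : m A = ∑ i ∈ Finset.range n, m (B i) := by
    rw [hAeq]
    exact measure_biUnion_finset hBdisj (fun i _ => hBmeas i)
  have hmBfin : ∀ i, m (B i) ≠ ⊤ :=
    fun i => ne_top_of_le_ne_top hA.measure_lt_top.ne (measure_mono (hBsubA i))
  -- main estimate via inner regularity
  refine ENNReal.le_of_forall_pos_le_add (fun ε hε _ => ?_)
  have hεn : (ε : ℝ≥0∞) / n ≠ 0 :=
    ENNReal.div_ne_zero.mpr ⟨ENNReal.coe_ne_zero.mpr hε.ne', ENNReal.natCast_ne_top n⟩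
  have hex : ∀ i, ∃ C, C ⊆ B i ∧ IsCompact C ∧ m (B i) < m C + (ε : ℝ≥0∞) / n := by
    intro i
    obtain ⟨C, hC1, hC2, hC3⟩ := (hBmeas i).exists_isCompact_lt_add (hmBfin i) hεn
    exact ⟨C, hC1, hC2, hC3⟩
  choose C hC1 hC2 hC3 using hex
  -- evolved sets
  set U : ℕ → Set X := fun i => midSet (C i) (y i) t with hUdef
  have hUcpt : ∀ i, IsCompact (U i) := fun i => isCompact_midSet _ (hC2 i) _ htI
  have hUest : ∀ i, ENNReal.ofReal (f t) * m (C i) ≤ m (U i) := by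
    intro i
    refine le_trans (hEE (C i) (hC2 i) (y i) t htI) (measure_mono ?_)
    exact evoSet_subset_midSet (C i) (y i) htI
  -- membership facts for U
  have hUgeod : ∀ i, ∀ z ∈ U i, ∃ γ : ℝ → X, IsGeodesic γ ∧ γ 0 ∈ C i ∧ γ 1 = y i ∧ γ t = z := by
    intro i z hz
    obtain ⟨γ, hγ, hγ0, hγΛ, hγt⟩ := midSet_subset_evoSet hgeo (C i) (y i) ht hz
    exact ⟨γ, hγ, hγ0, by simpa using hγΛ.2, hγt⟩
  have hUdisj : Set.PairwiseDisjoint (↑(Finset.range n) : Set ℕ) U := by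
    intro i hi j hj hij
    refine Set.disjoint_left.mpr (fun z hzi hzj => ?_)
    obtain ⟨γ, hγ, hγ0, hγ1, hγt⟩ := hUgeod i z hzi
    obtain ⟨σ, hσ, hσ0, hσ1, hσt⟩ := hUgeod j z hzj
    have heq := start_eq_of_meet hnb h hconv hmono φc Λ y n i j
      (Finset.mem_range.mp (by exact_mod_cast hi)) (Finset.mem_range.mp (by exact_mod_cast hj))
      γ σ hγ hσ (hBsubE i (hC1 i hγ0)) (hBsubE j (hC1 j hσ0)) hγ1 hσ1 ht
      (by rw [hγt, hσt])
    have : γ 0 ∈ B i ∩ B j := ⟨hC1 i hγ0, heq ▸ hC1 j hσ0⟩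
    exact Set.disjoint_left.mp (hBdisj (by exact_mod_cast hi) (by exact_mod_cast hj) hij)
      this.1 this.2
  have hUsub : (⋃ i ∈ Finset.range n, U i) ⊆ evoSet A (Λn h φc Λ y n) t := by
    intro z hz
    obtain ⟨i, hi, hzi⟩ := by
      simpa only [Set.mem_iUnion, exists_prop] using hz
    obtain ⟨γ, hγ, hγ0, hγ1, hγt⟩ := hUgeod i z hzi
    refine ⟨γ, hγ, hBsubA i (hC1 i hγ0), ?_, hγt⟩
    refine Set.mem_iUnion.mpr ⟨i, Set.mem_iUnion.mpr ⟨Finset.mem_range.mp hi, ?_⟩⟩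
    exact ⟨hBsubE i (hC1 i hγ0), by simp [hγ1]⟩
  -- put everything together
  have hsum : m (⋃ i ∈ Finset.range n, U i) = ∑ i ∈ Finset.range n, m (U i) :=
    measure_biUnion_finset hUdisj (fun i _ => (hUcpt i).isClosed.measurableSet)
  calc ENNReal.ofReal (f t) * m A
      = ∑ i ∈ Finset.range n, ENNReal.ofReal (f t) * m (B i) := by
        rw [hmB, Finset.mul_sum]
    _ ≤ ∑ i ∈ Finset.range n, (m (U i) + (ε : ℝ≥0∞) / n) := by
        refine Finset.sum_le_sum (fun i _ => ?_)
        calc ENNReal.ofReal (f t) * m (B i)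
            ≤ ENNReal.ofReal (f t) * (m (C i) + (ε : ℝ≥0∞) / n) := by
              exact mul_le_mul_right (hC3 i).le _
          _ = ENNReal.ofReal (f t) * m (C i) + ENNReal.ofReal (f t) * ((ε : ℝ≥0∞) / n) := by
              rw [mul_add]
          _ ≤ m (U i) + (ε : ℝ≥0∞) / n := by
              refine add_le_add (hUest i) ?_
              calc ENNReal.ofReal (f t) * ((ε : ℝ≥0∞) / n) ≤ 1 * ((ε : ℝ≥0∞) / n) :=
                    mul_le_mul_left hg1 _
                _ = (ε : ℝ≥0∞) / n := one_mul _
    _ = ∑ i ∈ Finset.range n, m (U i) + (n : ℝ≥0∞) * ((ε : ℝ≥0∞) / n) := by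
        rw [Finset.sum_add_distrib, Finset.sum_const, Finset.card_range, nsmul_eq_mul]
    _ ≤ m (evoSet A (Λn h φc Λ y n) t) + (ε : ℝ≥0∞) := by
        refine add_le_add (hsum ▸ measure_mono hUsub) ?_
        rw [ENNReal.mul_div_cancel (Nat.cast_ne_zero.mpr (by omega) : (n:ℝ≥0∞) ≠ 0)
          (ENNReal.natCast_ne_top n)]
end

section
/- (Evolution estimate, Theorem 2.2.) Assume (X,d) is a proper, geodesic, non-branching complete separable metric space and that the Borel measure m satisfies the evolution estimate with rate f. Then for every compact Λ⊂Γ and every compact A⊂P₁(Λ), setting Λ̂:=(P₁(Λ)×P₂(Λ))∩Γ, one has m(A_{t,Λ̂}) ≥ f(t)·m(A) for all t∈[0,1]. -/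
open Set Metric MeasureTheory

section AuxGeo

variable {X : Type*} [MetricSpace X]

lemma IsGeodesic.reverse {γ : ℝ → X} (hγ : IsGeodesic γ) :
    IsGeodesic (fun s => γ (1 - s)) := by
  intro s hs s' hs'
  simp only [sub_zero, sub_self]
  rw [hγ (1 - s) ⟨by linarith [hs.2], by linarith [hs.1]⟩ (1 - s')
      ⟨by linarith [hs'.2], by linarith [hs'.1]⟩,
    show (1 - s) - (1 - s') = s' - s by ring, abs_sub_comm s' s, dist_comm (γ 0) (γ 1)]

lemma glue_core (hgeo : GeodesicMetricSpace X) {t D : ℝ} (ht : t ∈ Set.Ioo (0:ℝ) 1)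
    {pre : ℝ → X} {v : X}
    (hpre : ∀ s ∈ Set.Icc (0:ℝ) t, ∀ s' ∈ Set.Icc (0:ℝ) t,
      dist (pre s) (pre s') = |s - s'| * D)
    (hv1 : dist (pre 0) v = D) (hv2 : dist (pre t) v = (1 - t) * D) :
    ∃ η : ℝ → X, IsGeodesic η ∧ (∀ s, s ≤ t → η s = pre s) ∧ η 1 = v := by
  obtain ⟨ht0, ht1⟩ := ht
  have hne : (1:ℝ) - t ≠ 0 := by linarith
  have hD : 0 ≤ D := by rw [← hv1]; exact dist_nonneg
  obtain ⟨σ, hσ, hσ0, hσ1⟩ := hgeo (pre t) v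
  have hσd : dist (σ 0) (σ 1) = (1 - t) * D := by rw [hσ0, hσ1, hv2]
  set η : ℝ → X := fun s => if s ≤ t then pre s else σ ((s - t) / (1 - t)) with hηdef
  have hηle : ∀ s, s ≤ t → η s = pre s := fun s hs => if_pos hs
  have hη1 : η 1 = v := by
    have h1t : ¬ (1:ℝ) ≤ t := not_le.mpr ht1
    simp only [hηdef, h1t, if_false]
    rw [div_self (by linarith : (1:ℝ) - t ≠ 0), hσ1]
  have hσpt : ∀ r ∈ Set.Icc (0:ℝ) 1, dist (pre t) (σ r) = r * ((1 - t) * D) := by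
    intro r hr
    rw [← hσ0, hσ (0:ℝ) ⟨le_rfl, zero_le_one⟩ r hr, hσd, zero_sub, abs_neg,
      abs_of_nonneg hr.1]
  have hσpt1 : ∀ r ∈ Set.Icc (0:ℝ) 1, dist (σ r) v = (1 - r) * ((1 - t) * D) := by
    intro r hr
    rw [← hσ1, hσ r hr 1 ⟨zero_le_one, le_rfl⟩, hσd,
      abs_of_nonpos (by linarith [hr.2] : r - 1 ≤ 0)]
    ring
  have key : ∀ s ∈ Set.Icc (0:ℝ) 1, ∀ s' ∈ Set.Icc (0:ℝ) 1, s ≤ s' →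
      dist (η s) (η s') = (s' - s) * D := by
    intro s hs s' hs' hss
    by_cases hs't : s' ≤ t
    · have hst : s ≤ t := le_trans hss hs't
      rw [hηle s hst, hηle s' hs't, hpre s ⟨hs.1, hst⟩ s' ⟨hs'.1, hs't⟩,
        abs_of_nonpos (by linarith : s - s' ≤ 0)]
      ring
    · push_neg at hs't
      have hr'mem : (s' - t) / (1 - t) ∈ Set.Icc (0:ℝ) 1 :=
        ⟨div_nonneg (by linarith) (by linarith),
          (div_le_one (by linarith)).mpr (by linarith [hs'.2])⟩
      have hηs' : η s' = σ ((s' - t) / (1 - t)) := if_neg (not_le.mpr hs't)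
      by_cases hst : s ≤ t
      · have hA1 : dist (η s) (pre t) = (t - s) * D := by
          rw [hηle s hst, hpre s ⟨hs.1, hst⟩ t ⟨ht0.le, le_rfl⟩,
            abs_of_nonpos (by linarith : s - t ≤ 0)]
          ring
        have hA2 : dist (pre t) (η s') = (s' - t) * D := by
          rw [hηs', hσpt _ hr'mem]
          field_simp
        have hup : dist (η s) (η s') ≤ (s' - s) * D := by
          calc dist (η s) (η s') ≤ dist (η s) (pre t) + dist (pre t) (η s') :=
                dist_triangle _ _ _
          _ = (s' - s) * D := by rw [hA1, hA2]; ring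
        have h0s : dist (pre 0) (η s) = s * D := by
          rw [hηle s hst, hpre 0 ⟨le_rfl, ht0.le⟩ s ⟨hs.1, hst⟩, zero_sub, abs_neg,
            abs_of_nonneg hs.1]
        have hs'v : dist (η s') v = (1 - s') * D := by
          rw [hηs', hσpt1 _ hr'mem]
          field_simp
          ring
        have hlow : D ≤ s * D + (dist (η s) (η s') + (1 - s') * D) := by
          calc D = dist (pre 0) v := hv1.symm
          _ ≤ dist (pre 0) (η s) + dist (η s) v := dist_triangle _ _ _
          _ ≤ dist (pre 0) (η s) + (dist (η s) (η s') + dist (η s') v) :=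
              add_le_add_right (dist_triangle _ _ _) _
          _ = s * D + (dist (η s) (η s') + (1 - s') * D) := by rw [h0s, hs'v]
        have hlow' : (s' - s) * D ≤ dist (η s) (η s') := by linarith
        linarith
      · push_neg at hst
        have hrmem : (s - t) / (1 - t) ∈ Set.Icc (0:ℝ) 1 :=
          ⟨div_nonneg (by linarith) (by linarith),
            (div_le_one (by linarith)).mpr (by linarith [hs.2])⟩
        have hηs : η s = σ ((s - t) / (1 - t)) := if_neg (not_le.mpr hst)
        rw [hηs, hηs', hσ _ hrmem _ hr'mem, hσd,
          show (s - t) / (1 - t) - (s' - t) / (1 - t) = (s - s') / (1 - t) by ring,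
          abs_div, abs_of_nonpos (by linarith : s - s' ≤ 0),
          abs_of_pos (by linarith : (0:ℝ) < 1 - t)]
        field_simp
        ring
  refine ⟨η, ?_, hηle, hη1⟩
  intro s hs s' hs'
  have hη01 : dist (η 0) (η 1) = D := by
    rw [hηle 0 ht0.le, hη1, hv1]
  rcases le_total s s' with hss | hss
  · rw [key s hs s' hs' hss, hη01, abs_of_nonpos (by linarith : s - s' ≤ 0)]
    ring
  · rw [dist_comm, key s' hs' s hs hss, hη01, abs_of_nonneg (by linarith : (0:ℝ) ≤ s - s')]

lemma exists_geodesic_through (hgeo : GeodesicMetricSpace X) {x z v : X} {t : ℝ}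
    (ht : t ∈ Set.Icc (0:ℝ) 1)
    (e1 : dist x z = t * dist x v) (e2 : dist z v = (1 - t) * dist x v) :
    ∃ γ : ℝ → X, IsGeodesic γ ∧ γ 0 = x ∧ γ 1 = v ∧ γ t = z := by
  rcases eq_or_lt_of_le ht.1 with h0 | h0
  · obtain ⟨γ, hγ, hγ0, hγ1⟩ := hgeo x v
    have hzx : x = z := by
      have : dist x z = 0 := by rw [e1, ← h0, zero_mul]
      exact dist_eq_zero.mp this
    exact ⟨γ, hγ, hγ0, hγ1, by rw [← h0, hγ0, hzx]⟩
  rcases eq_or_lt_of_le ht.2 with h1 | h1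
  · obtain ⟨γ, hγ, hγ0, hγ1⟩ := hgeo x v
    have hzv : z = v := by
      have : dist z v = 0 := by rw [e2, h1]; ring
      exact dist_eq_zero.mp this
    exact ⟨γ, hγ, hγ0, hγ1, by rw [h1, hγ1, hzv]⟩
  obtain ⟨α, hα, hα0, hα1⟩ := hgeo x z
  have hαd : dist (α 0) (α 1) = t * dist x v := by rw [hα0, hα1, e1]
  have hpre : ∀ s ∈ Set.Icc (0:ℝ) t, ∀ s' ∈ Set.Icc (0:ℝ) t,
      dist (α (s / t)) (α (s' / t)) = |s - s'| * dist x v := by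
    intro s hs s' hs'
    have m1 : s / t ∈ Set.Icc (0:ℝ) 1 := ⟨div_nonneg hs.1 h0.le, (div_le_one h0).mpr hs.2⟩
    have m2 : s' / t ∈ Set.Icc (0:ℝ) 1 := ⟨div_nonneg hs'.1 h0.le, (div_le_one h0).mpr hs'.2⟩
    rw [hα _ m1 _ m2, hαd, div_sub_div_same, abs_div, abs_of_pos h0]
    field_simp
  have hpre0 : α (0 / t) = x := by rw [zero_div, hα0]
  have hpret : α (t / t) = z := by rw [div_self (ne_of_gt h0), hα1]
  obtain ⟨η, hηg, hηle, hη1⟩ := glue_core hgeo ⟨h0, h1⟩ (pre := fun s => α (s / t)) (v := v)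
    hpre (by show dist (α (0 / t)) v = dist x v; rw [hpre0])
    (by show dist (α (t / t)) v = (1 - t) * dist x v; rw [hpret]; exact e2)
  refine ⟨η, hηg, ?_, hη1, ?_⟩
  · rw [hηle 0 h0.le]; exact hpre0
  · rw [hηle t le_rfl]; exact hpret

end AuxGeo

section AuxCost

lemma cost_cont {c : ℝ → ℝ} (hconv : StrictConvexOn ℝ (Set.Ici (0:ℝ)) c)
    (hmono : MonotoneOn c (Set.Ici (0:ℝ))) : ContinuousOn c (Set.Ici (0:ℝ)) := by
  intro a ha
  have ha' : (0:ℝ) ≤ a := ha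
  have ha2 : a + 2 ∈ Set.Ici (0:ℝ) := Set.mem_Ici.mpr (by linarith)
  set C := c (a + 2) - c 0 with hC
  have hC0 : 0 ≤ C :=
    sub_nonneg.mpr (hmono (Set.mem_Ici.mpr le_rfl) ha2 (by linarith))
  have bound : ∀ x ∈ Set.Ici (0:ℝ), |x - a| ≤ 1 → |c x - c a| ≤ |x - a| * C := by
    intro x hx hxa
    have hx' : (0:ℝ) ≤ x := hx
    have hm0a : c 0 ≤ c a := hmono (Set.mem_Ici.mpr le_rfl) ha ha'
    have hm0x : c 0 ≤ c x := hmono (Set.mem_Ici.mpr le_rfl) hx hx'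
    rcases le_total a x with hax | hxa'
    · -- a ≤ x
      have hxa2 : x ≤ a + 1 := by have := (abs_le.mp hxa).1; have := (abs_le.mp hxa).2; linarith
      have hu0 : 0 ≤ (x - a) / 2 := by linarith
      have hu1 : (x - a) / 2 ≤ 1 := by linarith
      have hcomb := hconv.convexOn.2 ha ha2 (by linarith : (0:ℝ) ≤ 1 - (x - a)/2) hu0 (by ring)
      simp only [smul_eq_mul] at hcomb
      have harg : (1 - (x - a)/2) * a + (x - a)/2 * (a + 2) = x := by ring
      rw [harg] at hcomb
      have hmax : c a ≤ c x := hmono ha hx hax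
      have hma2 : c a ≤ c (a + 2) := hmono ha ha2 (by linarith)
      rw [abs_of_nonneg (by linarith : (0:ℝ) ≤ c x - c a),
        abs_of_nonneg (by linarith : (0:ℝ) ≤ x - a)]
      nlinarith [mul_nonneg (by linarith : (0:ℝ) ≤ x - a) (by linarith : (0:ℝ) ≤ c a - c 0),
        mul_nonneg (by linarith : (0:ℝ) ≤ x - a) (by linarith : (0:ℝ) ≤ c (a+2) - c a)]
    · -- x ≤ a
      have hden : (2:ℝ) ≤ a + 2 - x := by linarith
      have hden0 : (0:ℝ) < a + 2 - x := by linarith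
      set l := (a - x) / (a + 2 - x) with hl
      have hl0 : 0 ≤ l := div_nonneg (by linarith) hden0.le
      have hl1 : l ≤ 1 := (div_le_one hden0).mpr (by linarith)
      have hlden : l * (a + 2 - x) = a - x := div_mul_cancel₀ _ (ne_of_gt hden0)
      have hcomb := hconv.convexOn.2 hx ha2 (by linarith : (0:ℝ) ≤ 1 - l) hl0 (by ring)
      simp only [smul_eq_mul] at hcomb
      have harg : (1 - l) * x + l * (a + 2) = a := by nlinarith [hlden]
      rw [harg] at hcomb
      have hmxa : c x ≤ c a := hmono hx ha hxa'
      have hmxa2 : c x ≤ c (a + 2) := hmono hx ha2 (by linarith)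
      rw [abs_sub_comm, abs_of_nonneg (by linarith : (0:ℝ) ≤ c a - c x),
        abs_sub_comm, abs_of_nonneg (by linarith : (0:ℝ) ≤ a - x)]
      -- c a - c x ≤ l * (c (a+2) - c x) ≤ (a-x) * C
      have key1 : c a - c x ≤ l * (c (a+2) - c x) := by nlinarith [hcomb]
      have hlle : l ≤ a - x := by nlinarith [hlden, hl0]
      have hfac : c (a+2) - c x ≤ C := by rw [hC]; linarith
      have hfac0 : 0 ≤ c (a+2) - c x := by linarith
      calc c a - c x ≤ l * (c (a+2) - c x) := key1
      _ ≤ (a - x) * C := by nlinarith [hlle, hfac, hfac0, hl0, hC0]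
  rw [Metric.continuousWithinAt_iff]
  intro ε hε
  refine ⟨min 1 (ε / (C + 1)), by positivity, ?_⟩
  intro x hx hdx
  rw [Real.dist_eq] at hdx
  have hd1 : |x - a| ≤ 1 := le_of_lt (lt_of_lt_of_le hdx (min_le_left _ _))
  have hd2 : |x - a| < ε / (C + 1) := lt_of_lt_of_le hdx (min_le_right _ _)
  have hb := bound x hx hd1
  rw [Real.dist_eq]
  calc |c x - c a| ≤ |x - a| * C := hb
  _ ≤ (ε / (C + 1)) * C := mul_le_mul_of_nonneg_right hd2.le hC0
  _ < ε := by
      rw [div_mul_eq_mul_div, div_lt_iff₀ (by linarith : (0:ℝ) < C + 1)]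
      nlinarith [hε]

lemma cost_inj {c : ℝ → ℝ} (hconv : StrictConvexOn ℝ (Set.Ici (0:ℝ)) c)
    (hmono : MonotoneOn c (Set.Ici (0:ℝ))) {r r' : ℝ} (hr : 0 ≤ r) (hrr' : r ≤ r')
    (heq : c r = c r') : r = r' := by
  by_contra hne
  have hr' : (0:ℝ) ≤ r' := hr.trans hrr'
  have hmid := hconv.2 (Set.mem_Ici.mpr hr) (Set.mem_Ici.mpr hr') hne
    (by norm_num : (0:ℝ) < 1/2) (by norm_num : (0:ℝ) < 1/2) (by norm_num)
  simp only [smul_eq_mul] at hmid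
  have hmem : (1/2 : ℝ) * r + (1/2 : ℝ) * r' ∈ Set.Ici (0:ℝ) :=
    Set.mem_Ici.mpr (by positivity)
  have h2 : c r ≤ c ((1/2 : ℝ) * r + (1/2 : ℝ) * r') :=
    hmono (Set.mem_Ici.mpr hr) hmem (by nlinarith [lt_of_le_of_ne hrr' hne])
  rw [heq] at h2
  linarith [hmid, heq]

end AuxCost

section AuxRigid

variable {X : Type*} [MetricSpace X]

lemma rigid (hgeo : GeodesicMetricSpace X) (hnb : NonBranching X)
    {c : ℝ → ℝ} (hconv : StrictConvexOn ℝ (Set.Ici (0:ℝ)) c)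
    (hmono : MonotoneOn c (Set.Ici (0:ℝ)))
    {t : ℝ} (ht : t ∈ Set.Ioo (0:ℝ) 1) {γ γ' : ℝ → X}
    (hγ : IsGeodesic γ) (hγ' : IsGeodesic γ')
    (hcross : c (dist (γ 0) (γ 1)) + c (dist (γ' 0) (γ' 1)) ≤
      c (dist (γ 0) (γ' 1)) + c (dist (γ' 0) (γ 1)))
    (hz : γ t = γ' t) : γ 1 = γ' 1 ∧ γ 0 = γ' 0 := by
  obtain ⟨ht0, ht1⟩ := ht
  have htI : t ∈ Set.Icc (0:ℝ) 1 := ⟨ht0.le, ht1.le⟩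
  have h0I : (0:ℝ) ∈ Set.Icc (0:ℝ) 1 := ⟨le_rfl, zero_le_one⟩
  have h1I : (1:ℝ) ∈ Set.Icc (0:ℝ) 1 := ⟨zero_le_one, le_rfl⟩
  have habs0t : |(0:ℝ) - t| = t := by rw [zero_sub, abs_neg, abs_of_nonneg ht0.le]
  have habst1 : |t - 1| = 1 - t := by rw [abs_of_nonpos (by linarith)]; ring
  set a := dist (γ 0) (γ 1) with hadef
  set b := dist (γ' 0) (γ' 1) with hbdef
  have ha0 : 0 ≤ a := dist_nonneg
  have hb0 : 0 ≤ b := dist_nonneg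
  have dxz : dist (γ 0) (γ t) = t * a := by rw [hγ 0 h0I t htI, habs0t]
  have dzu : dist (γ t) (γ 1) = (1 - t) * a := by rw [hγ t htI 1 h1I, habst1]
  have dx'z : dist (γ' 0) (γ t) = t * b := by rw [hz, hγ' 0 h0I t htI, habs0t]
  have dzu' : dist (γ t) (γ' 1) = (1 - t) * b := by rw [hz, hγ' t htI 1 h1I, habst1]
  have tri1 : dist (γ 0) (γ' 1) ≤ t * a + (1 - t) * b := by
    calc dist (γ 0) (γ' 1) ≤ dist (γ 0) (γ t) + dist (γ t) (γ' 1) := dist_triangle _ _ _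
    _ = t * a + (1 - t) * b := by rw [dxz, dzu']
  have tri2 : dist (γ' 0) (γ 1) ≤ t * b + (1 - t) * a := by
    calc dist (γ' 0) (γ 1) ≤ dist (γ' 0) (γ t) + dist (γ t) (γ 1) := dist_triangle _ _ _
    _ = t * b + (1 - t) * a := by rw [dx'z, dzu]
  have hmem1 : t * a + (1 - t) * b ∈ Set.Ici (0:ℝ) :=
    Set.mem_Ici.mpr (add_nonneg (mul_nonneg ht0.le ha0) (mul_nonneg (by linarith) hb0))
  have hmem2 : t * b + (1 - t) * a ∈ Set.Ici (0:ℝ) :=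
    Set.mem_Ici.mpr (add_nonneg (mul_nonneg ht0.le hb0) (mul_nonneg (by linarith) ha0))
  have hm1 : c (dist (γ 0) (γ' 1)) ≤ c (t * a + (1 - t) * b) :=
    hmono (Set.mem_Ici.mpr dist_nonneg) hmem1 tri1
  have hm2 : c (dist (γ' 0) (γ 1)) ≤ c (t * b + (1 - t) * a) :=
    hmono (Set.mem_Ici.mpr dist_nonneg) hmem2 tri2
  have hab : a = b := by
    by_contra hne
    have s1 := hconv.2 (Set.mem_Ici.mpr ha0) (Set.mem_Ici.mpr hb0) hne ht0
      (by linarith : (0:ℝ) < 1 - t) (by ring)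
    have s2 := hconv.2 (Set.mem_Ici.mpr hb0) (Set.mem_Ici.mpr ha0) (Ne.symm hne) ht0
      (by linarith : (0:ℝ) < 1 - t) (by ring)
    simp only [smul_eq_mul] at s1 s2
    have s2' : c (t * b + (1 - t) * a) < t * c b + (1 - t) * c a := s2
    linarith [hcross, hm1, hm2, s1, s2']
  have hsum1 : t * a + (1 - t) * b = a := by rw [← hab]; ring
  have hsum2 : t * b + (1 - t) * a = a := by rw [← hab]; ring
  rw [hsum1] at hm1 tri1
  rw [hsum2] at hm2 tri2
  have hcb : c b = c a := by rw [hab]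
  have hcu' : c (dist (γ 0) (γ' 1)) = c a :=
    le_antisymm hm1 (by linarith [hcross, hm1, hm2, hcb])
  have hcu : c (dist (γ' 0) (γ 1)) = c a :=
    le_antisymm hm2 (by linarith [hcross, hm1, hm2, hcb])
  have du' : dist (γ 0) (γ' 1) = a := cost_inj hconv hmono dist_nonneg tri1 hcu'
  have du : dist (γ' 0) (γ 1) = a := cost_inj hconv hmono dist_nonneg tri2 hcu
  rcases eq_or_lt_of_le ha0 with haz | haz
  · -- a = 0 : everything collapses
    have h1 : γ 0 = γ 1 := dist_eq_zero.mp (by rw [← hadef, ← haz])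
    have h2 : γ 0 = γ' 1 := dist_eq_zero.mp (by rw [du', ← haz])
    have h3 : γ' 0 = γ 1 := dist_eq_zero.mp (by rw [du, ← haz])
    exact ⟨by rw [← h1, h2], by rw [h3, ← h1]⟩
  · -- a > 0
    -- Step A : γ 1 = γ' 1
    have hpreA : ∀ s ∈ Set.Icc (0:ℝ) t, ∀ s' ∈ Set.Icc (0:ℝ) t,
        dist (γ s) (γ s') = |s - s'| * a := by
      intro s hs s' hs'
      exact hγ s ⟨hs.1, hs.2.trans ht1.le⟩ s' ⟨hs'.1, hs'.2.trans ht1.le⟩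
    obtain ⟨η, hηg, hηle, hη1⟩ := glue_core hgeo ⟨ht0, ht1⟩ (pre := γ) (v := γ' 1)
      hpreA du' (by rw [dzu', hab])
    have hagree : ∀ s ∈ Set.Icc (0:ℝ) t, γ s = η s := fun s hs => (hηle s hs.2).symm
    have hall := hnb γ η hγ hηg t ⟨ht0, ht1⟩ hagree
    have hu : γ 1 = γ' 1 := by rw [hall 1 h1I, hη1]
    -- Step B : γ 0 = γ' 0
    have hγrg : IsGeodesic (fun s => γ (1 - s)) := hγ.reverse
    have htI' : (1:ℝ) - t ∈ Set.Ioo (0:ℝ) 1 := ⟨by linarith, by linarith⟩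
    have hpreB : ∀ s ∈ Set.Icc (0:ℝ) (1 - t), ∀ s' ∈ Set.Icc (0:ℝ) (1 - t),
        dist (γ (1 - s)) (γ (1 - s')) = |s - s'| * a := by
      intro s hs s' hs'
      rw [hγ (1 - s) ⟨by linarith [hs.2], by linarith [hs.1]⟩ (1 - s')
          ⟨by linarith [hs'.2], by linarith [hs'.1]⟩,
        show (1 - s) - (1 - s') = s' - s by ring, abs_sub_comm s' s]
    have hvB1 : dist (γ (1 - 0)) (γ' 0) = a := by
      rw [show (1:ℝ) - 0 = 1 by ring, dist_comm]; exact du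
    have hvB2 : dist (γ (1 - (1 - t))) (γ' 0) = (1 - (1 - t)) * a := by
      rw [show (1:ℝ) - (1 - t) = t by ring, dist_comm, dx'z, hab]
    obtain ⟨η', hη'g, hη'le, hη'1⟩ := glue_core hgeo htI'
      (pre := fun s => γ (1 - s)) (v := γ' 0) hpreB hvB1 hvB2
    have hagree' : ∀ s ∈ Set.Icc (0:ℝ) (1 - t), (fun s => γ (1 - s)) s = η' s :=
      fun s hs => (hη'le s hs.2).symm
    have hall' := hnb _ η' hγrg hη'g (1 - t) htI' hagree'
    have hx : γ 0 = γ' 0 := by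
      have := hall' 1 h1I
      simp only [sub_self] at this
      rw [this, hη'1]
    exact ⟨hu, hx⟩

end AuxRigid

section AuxEvo

variable {X : Type*} [MetricSpace X]

lemma evo_point_char (hgeo : GeodesicMetricSpace X) {E : Set X} {y : X} {t : ℝ}
    (ht : t ∈ Set.Icc (0:ℝ) 1) :
    evoSet E (E ×ˢ ({y} : Set X)) t
      = {z | ∃ x ∈ E, dist x z = t * dist x y ∧ dist z y = (1 - t) * dist x y} := by
  have habs0t : |(0:ℝ) - t| = t := by rw [zero_sub, abs_neg, abs_of_nonneg ht.1]
  have habst1 : |t - 1| = 1 - t := by rw [abs_of_nonpos (by linarith [ht.2])]; ring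
  have h0I : (0:ℝ) ∈ Set.Icc (0:ℝ) 1 := ⟨le_rfl, zero_le_one⟩
  have h1I : (1:ℝ) ∈ Set.Icc (0:ℝ) 1 := ⟨zero_le_one, le_rfl⟩
  ext z
  constructor
  · rintro ⟨γ, hγ, hγ0E, hγpair, hγt⟩
    have hy : γ 1 = y := hγpair.2
    refine ⟨γ 0, hγ0E, ?_, ?_⟩
    · rw [← hγt, ← hy, hγ 0 h0I t ht, habs0t]
    · rw [← hγt, ← hy, hγ t ht 1 h1I, habst1]
  · rintro ⟨x, hxE, e1, e2⟩
    obtain ⟨γ, hγ, hγ0, hγ1, hγt⟩ := exists_geodesic_through hgeo ht e1 e2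
    exact ⟨γ, hγ, by rwa [hγ0], by rw [hγ0, hγ1]; exact ⟨hxE, rfl⟩, hγt⟩

lemma evo_point_compact [ProperSpace X] (hgeo : GeodesicMetricSpace X) {E : Set X}
    (hE : IsCompact E) (y : X) {t : ℝ} (ht : t ∈ Set.Icc (0:ℝ) 1) :
    IsCompact (evoSet E (E ×ˢ ({y} : Set X)) t) := by
  rw [evo_point_char hgeo ht]
  obtain ⟨R, hR⟩ := hE.isBounded.subset_closedBall y
  have heq : {z | ∃ x ∈ E, dist x z = t * dist x y ∧ dist z y = (1 - t) * dist x y}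
      = Prod.snd '' ((E ×ˢ closedBall y R) ∩
        ({p : X × X | dist p.1 p.2 = t * dist p.1 y} ∩
          {p : X × X | dist p.2 y = (1 - t) * dist p.1 y})) := by
    ext z
    constructor
    · rintro ⟨x, hx, e1, e2⟩
      have hxy : dist x y ≤ R := by simpa [Metric.mem_closedBall] using hR hx
      have hzy : dist z y ≤ R := by
        rw [e2]
        nlinarith [dist_nonneg (x := x) (y := y), ht.1, ht.2]
      exact ⟨(x, z), ⟨⟨hx, by simpa [Metric.mem_closedBall] using hzy⟩, e1, e2⟩, rfl⟩
    · rintro ⟨⟨x, z'⟩, ⟨⟨hx, _⟩, e1, e2⟩, rfl⟩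
      exact ⟨x, hx, e1, e2⟩
  rw [heq]
  refine IsCompact.image ?_ continuous_snd
  refine IsCompact.inter_right (hE.prod (isCompact_closedBall y R)) ?_
  refine IsClosed.inter ?_ ?_
  · exact isClosed_eq (continuous_fst.dist continuous_snd)
      (continuous_const.mul (continuous_fst.dist continuous_const))
  · exact isClosed_eq (continuous_snd.dist continuous_const)
      (continuous_const.mul (continuous_fst.dist continuous_const))

end AuxEvo

section AuxMeas

lemma inner_approx {X : Type*} [MetricSpace X] [MeasurableSpace X] [BorelSpace X]
    (m : Measure X) {A B : Set X} (hA : IsCompact A) (hmA : m A ≠ ⊤)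
    (hBA : B ⊆ A) (hB : MeasurableSet B) {δ : ENNReal} (hδ : δ ≠ 0) :
    ∃ F, F ⊆ B ∧ IsCompact F ∧ m B ≤ m F + δ := by
  set ν := m.restrict A with hν
  haveI : IsFiniteMeasure ν := by
    constructor
    rw [hν, Measure.restrict_apply_univ]
    exact lt_of_le_of_ne le_top hmA
  obtain ⟨F, hFB, hFcl, hlt⟩ := hB.exists_isClosed_lt_add (μ := ν) (measure_ne_top ν B) hδ
  refine ⟨F, hFB, hA.of_isClosed_subset hFcl (hFB.trans hBA), ?_⟩
  have h1 : ν B = m B := by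
    rw [hν, Measure.restrict_apply hB, Set.inter_eq_self_of_subset_left hBA]
  have h2 : ν F ≤ m F := by
    rw [hν, Measure.restrict_apply hFcl.measurableSet]
    exact measure_mono Set.inter_subset_left
  calc m B = ν B := h1.symm
  _ ≤ ν F + δ := hlt.le
  _ ≤ m F + δ := add_le_add_left h2 _

end AuxMeas


theorem evolution_estimate
    {X : Type*} [MetricSpace X] [ProperSpace X] [CompleteSpace X]
    [TopologicalSpace.SeparableSpace X] [MeasurableSpace X] [BorelSpace X]
    (hgeo : GeodesicMetricSpace X) (hnb : NonBranching X)
    (m : Measure X) [IsFiniteMeasureOnCompacts m]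
    (f : ℝ → ℝ) (hm : EvolutionEstimate m f)
    (h : ℝ → ℝ) (hconv : StrictConvexOn ℝ (Set.Ici (0:ℝ)) h)
    (hmono : MonotoneOn h (Set.Ici (0:ℝ))) (hpos : ∀ x ∈ Set.Ici (0:ℝ), 0 ≤ h x)
    (K : Set X) (hK : IsCompact K)
    (φ φc : X → ℝ) (hφ : ContinuousOn φ K) (hφc : ContinuousOn φc K)
    (hpot : ∀ x ∈ K, ∀ y ∈ K, φ x + φc y ≤ h (dist x y))
    (Λ : Set (X × X)) (hΛcpt : IsCompact Λ) (hΛΓ : Λ ⊆ contactSet h φ φc K)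
    (A : Set X) (hA : IsCompact A) (hAsub : A ⊆ Prod.fst '' Λ)
    (t : ℝ) (ht : t ∈ Set.Icc (0:ℝ) 1) :
    ENNReal.ofReal (f t) * m A ≤
      m (evoSet A (((Prod.fst '' Λ) ×ˢ (Prod.snd '' Λ)) ∩ contactSet h φ φc K) t) := by
  classical
  rcases Set.eq_empty_or_nonempty A with rfl | hAne
  · simp
  obtain ⟨x₀, hx₀A⟩ := hAne
  set P1 : Set X := Prod.fst '' Λ with hP1def
  set P2 : Set X := Prod.snd '' Λ with hP2def
  set T : Set X := evoSet A ((P1 ×ˢ P2) ∩ contactSet h φ φc K) t with hTdef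
  have hP2cpt : IsCompact P2 := hΛcpt.image continuous_snd
  have hP1K : P1 ⊆ K := by rintro _ ⟨p, hp, rfl⟩; exact (hΛΓ hp).1
  have hP2K : P2 ⊆ K := by rintro _ ⟨p, hp, rfl⟩; exact (hΛΓ hp).2.1
  have hAK : A ⊆ K := hAsub.trans hP1K
  obtain ⟨p₀, hp₀Λ, hp₀1⟩ := hAsub hx₀A
  have hP2ne : P2.Nonempty := ⟨p₀.2, ⟨p₀, hp₀Λ, rfl⟩⟩
  have hhc : ContinuousOn h (Set.Ici 0) := cost_cont hconv hmono
  obtain ⟨R, hKR⟩ := hK.isBounded.subset_closedBall x₀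
  have hR0 : 0 ≤ R := by
    have := hKR (hAK hx₀A)
    simpa [Metric.mem_closedBall] using this
  set BIG : Set X := closedBall x₀ (3 * R + 3) with hBIGdef
  have hBIGcpt : IsCompact BIG := isCompact_closedBall _ _
  have hmA : m A ≠ ⊤ := hA.measure_lt_top.ne
  -- ===== main per-level construction =====
  have key : ∀ δ : ENNReal, δ ≠ 0 → ∀ n : ℕ, ∃ U : Set X,
      U ⊆ BIG ∧ MeasurableSet U ∧ ENNReal.ofReal (f t) * m A ≤ m U + δ ∧
      ∀ z ∈ U, ∃ x ∈ A, ∃ u ∈ P2,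
        dist x z = t * dist x u ∧ dist z u = (1 - t) * dist x u ∧
        ∀ y ∈ P2, ∃ y' ∈ P2, dist y' y ≤ 1 / (n + 1) ∧
          h (dist x u) - φc u ≤ h (dist x y') - φc y' := by
    intro δ hδ n
    have hεpos : (0:ℝ) < 1 / (n + 1) := by positivity
    obtain ⟨s, hs_sub, hs_cov⟩ := hP2cpt.elim_nhds_subcover (fun p => ball p (1/(n+1)))
      (fun p _ => ball_mem_nhds p hεpos)
    obtain ⟨L, hLnd, hLmem⟩ : ∃ L : List X, L.Nodup ∧ ∀ p, p ∈ L ↔ p ∈ s :=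
      ⟨s.toList, s.nodup_toList, fun p => Finset.mem_toList⟩
    have hNpos : 0 < L.length := by
      obtain ⟨u0, hu0⟩ := hP2ne
      have := hs_cov hu0
      rw [Set.mem_iUnion₂] at this
      obtain ⟨p, hp, -⟩ := this
      exact List.length_pos_iff.mpr (List.ne_nil_of_mem ((hLmem p).mpr hp))
    haveI : Nonempty (Fin L.length) := ⟨⟨0, hNpos⟩⟩
    set yv : Fin L.length → X := fun i => L.get i with hyvdef
    have hyvP2 : ∀ i, yv i ∈ P2 := fun i => hs_sub _ ((hLmem _).mp (L.get_mem i))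
    have hyvinj : Function.Injective yv := List.nodup_iff_injective_get.mp hLnd
    set g : Fin L.length → X → ℝ := fun i x => h (dist x (yv i)) - φc (yv i) with hgdef
    have hgcont : ∀ i, Continuous (g i) := by
      intro i
      apply Continuous.sub _ continuous_const
      exact ContinuousOn.comp_continuous hhc (continuous_id.dist continuous_const)
        (fun x => dist_nonneg)
    set C : Fin L.length → Set X := fun i => A ∩ ⋂ j, {x | g i x ≤ g j x} with hCdef
    have hCclosed : ∀ i, IsClosed (C i) := fun i => hA.isClosed.inter
      (isClosed_iInter (fun j => isClosed_le (hgcont i) (hgcont j)))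
    have hCsubA : ∀ i, C i ⊆ A := fun i => Set.inter_subset_left
    have hCg : ∀ i, ∀ x ∈ C i, ∀ j, g i x ≤ g j x := by
      intro i x hx j
      exact Set.mem_iInter.mp hx.2 j
    have hCcover : ∀ x ∈ A, ∃ i, x ∈ C i := by
      intro x hx
      obtain ⟨i, -, hi⟩ := Finset.exists_min_image Finset.univ (fun i => g i x)
        ⟨⟨0, hNpos⟩, Finset.mem_univ _⟩
      exact ⟨i, hx, Set.mem_iInter.mpr (fun j => hi j (Finset.mem_univ j))⟩
    set C' : Fin L.length → Set X := fun i => C i \ ⋃ (j : Fin L.length) (_ : j < i), C j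
      with hC'def
    have hC'meas : ∀ i, MeasurableSet (C' i) := fun i => ((hCclosed i).measurableSet).diff
      (MeasurableSet.iUnion (fun j => MeasurableSet.iUnion (fun _ => (hCclosed j).measurableSet)))
    have hC'subC : ∀ i, C' i ⊆ C i := fun i => Set.diff_subset
    have hC'subA : ∀ i, C' i ⊆ A := fun i => (hC'subC i).trans (hCsubA i)
    have hC'disj : Pairwise (Function.onFun Disjoint C') := by
      intro i j hij
      rw [Function.onFun, Set.disjoint_left]
      intro x hxi hxj
      rcases lt_or_gt_of_ne hij with hlt | hlt
      · exact hxj.2 (Set.mem_iUnion.mpr ⟨i, Set.mem_iUnion.mpr ⟨hlt, hxi.1⟩⟩)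
      · exact hxi.2 (Set.mem_iUnion.mpr ⟨j, Set.mem_iUnion.mpr ⟨hlt, hxj.1⟩⟩)
    have hC'cover : A = ⋃ i, C' i := by
      apply Set.Subset.antisymm
      · intro x hx
        obtain ⟨i, hi, hmin⟩ : ∃ i, x ∈ C i ∧ ∀ j < i, x ∉ C j := by
          set Q := Finset.univ.filter (fun i => x ∈ C i) with hQ
          have hQne : Q.Nonempty := by
            obtain ⟨i, hi⟩ := hCcover x hx
            exact ⟨i, by simp [hQ, hi]⟩
          refine ⟨Q.min' hQne, ?_, ?_⟩
          · have := Q.min'_mem hQne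
            simp only [hQ, Finset.mem_filter] at this
            exact this.2
          · intro j hj hjC
            have : Q.min' hQne ≤ j := Q.min'_le j (by simp [hQ, hjC])
            exact absurd hj (not_lt.mpr this)
        refine Set.mem_iUnion.mpr ⟨i, hi, ?_⟩
        intro hmem
        rw [Set.mem_iUnion] at hmem
        obtain ⟨j, hjmem⟩ := hmem
        rw [Set.mem_iUnion] at hjmem
        obtain ⟨hji, hxj⟩ := hjmem
        exact hmin j hji hxj
      · exact Set.iUnion_subset (fun i => hC'subA i)
    have hmsum : m A = ∑ i, m (C' i) := by
      rw [hC'cover, measure_iUnion hC'disj hC'meas, tsum_fintype]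
    have hδN : δ / (L.length : ENNReal) ≠ 0 := by
      simp only [ne_eq, ENNReal.div_eq_zero_iff, not_or]
      exact ⟨hδ, ENNReal.natCast_ne_top _⟩
    have hinner : ∀ i, ∃ F, F ⊆ C' i ∧ IsCompact F ∧
        m (C' i) ≤ m F + δ / (L.length : ENNReal) := fun i =>
      inner_approx m hA hmA (hC'subA i) (hC'meas i) hδN
    choose F hFsub hFcpt hFest using hinner
    set S : Fin L.length → Set X := fun i => evoSet (F i) ((F i) ×ˢ ({yv i} : Set X)) t
      with hSdef
    have hSest : ∀ i, ENNReal.ofReal (f t) * m (F i) ≤ m (S i) := fun i =>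
      hm.2.2.2 (F i) (hFcpt i) (yv i) t ht
    have hScpt : ∀ i, IsCompact (S i) := fun i => evo_point_compact hgeo (hFcpt i) (yv i) ht
    have hSchar : ∀ i, S i = {z | ∃ x ∈ F i, dist x z = t * dist x (yv i) ∧
        dist z (yv i) = (1 - t) * dist x (yv i)} := fun i => evo_point_char hgeo ht
    have hSdisj : Pairwise (Function.onFun Disjoint S) := by
      intro i j hij
      rw [Function.onFun, Set.disjoint_left]
      intro z hzi hzj
      rw [hSchar i] at hzi
      rw [hSchar j] at hzj
      obtain ⟨xi, hxi, ei1, ei2⟩ := hzi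
      obtain ⟨xj, hxj, ej1, ej2⟩ := hzj
      rcases eq_or_lt_of_le ht.1 with ht0 | ht0
      · -- t = 0
        have hzi' : xi = z := dist_eq_zero.mp (by rw [ei1, ← ht0, zero_mul])
        have hzj' : xj = z := dist_eq_zero.mp (by rw [ej1, ← ht0, zero_mul])
        have hxij : xi = xj := by rw [hzi', hzj']
        exact Set.disjoint_left.mp (hC'disj hij) (hFsub i hxi)
          (hxij ▸ (hFsub j hxj))
      rcases eq_or_lt_of_le ht.2 with ht1 | ht1
      · -- t = 1
        have hzi' : z = yv i := dist_eq_zero.mp (by rw [ei2, ht1, sub_self, zero_mul])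
        have hzj' : z = yv j := dist_eq_zero.mp (by rw [ej2, ht1, sub_self, zero_mul])
        exact hij (hyvinj (hzi'.symm.trans hzj'))
      · -- 0 < t < 1 : rigidity
        obtain ⟨γ, hγg, hγ0, hγ1, hγt⟩ := exists_geodesic_through hgeo ht ei1 ei2
        obtain ⟨γ', hγ'g, hγ'0, hγ'1, hγ't⟩ := exists_geodesic_through hgeo ht ej1 ej2
        have hgi := hCg i xi (hC'subC i (hFsub i hxi)) j
        have hgj := hCg j xj (hC'subC j (hFsub j hxj)) i
        have hcross : h (dist (γ 0) (γ 1)) + h (dist (γ' 0) (γ' 1)) ≤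
            h (dist (γ 0) (γ' 1)) + h (dist (γ' 0) (γ 1)) := by
          rw [hγ0, hγ1, hγ'0, hγ'1]
          simp only [hgdef] at hgi hgj
          linarith
        have hrig := rigid hgeo hnb hconv hmono ⟨ht0, ht1⟩ hγg hγ'g hcross
          (by rw [hγt, hγ't])
        have hyy : yv i = yv j := by rw [← hγ1, ← hγ'1]; exact hrig.1
        exact hij (hyvinj hyy)
    have hSmeas : ∀ i, MeasurableSet (S i) := fun i => (hScpt i).isClosed.measurableSet
    refine ⟨⋃ i, S i, ?_, MeasurableSet.iUnion hSmeas, ?_, ?_⟩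
    · -- ⊆ BIG
      refine Set.iUnion_subset fun i => ?_
      rw [hSchar i]
      rintro z ⟨x, hx, e1, e2⟩
      have hxK : x ∈ K := hAK ((hC'subA i) (hFsub i hx))
      have hyK : yv i ∈ K := hP2K (hyvP2 i)
      have hxb : dist x x₀ ≤ R := by simpa [Metric.mem_closedBall] using hKR hxK
      have hyb : dist (yv i) x₀ ≤ R := by simpa [Metric.mem_closedBall] using hKR hyK
      have hxy : dist x (yv i) ≤ 2 * R := by
        calc dist x (yv i) ≤ dist x x₀ + dist x₀ (yv i) := dist_triangle _ _ _
        _ ≤ 2 * R := by rw [dist_comm x₀]; linarith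
      have hzx : dist z x ≤ 2 * R := by
        rw [dist_comm, e1]
        nlinarith [ht.1, ht.2, dist_nonneg (x := x) (y := yv i)]
      simp only [hBIGdef, Metric.mem_closedBall]
      calc dist z x₀ ≤ dist z x + dist x x₀ := dist_triangle _ _ _
      _ ≤ 3 * R + 3 := by linarith
    · -- measure estimate
      have hUm : m (⋃ i, S i) = ∑ i, m (S i) := by
        rw [measure_iUnion hSdisj hSmeas, tsum_fintype]
      have h1 : m A ≤ ∑ i, m (F i) + δ := by
        rw [hmsum]
        calc ∑ i, m (C' i) ≤ ∑ i, (m (F i) + δ / (L.length : ENNReal)) :=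
              Finset.sum_le_sum (fun i _ => hFest i)
        _ = ∑ i, m (F i) + ∑ _i : Fin L.length, δ / (L.length : ENNReal) := by
              rw [Finset.sum_add_distrib]
        _ ≤ ∑ i, m (F i) + δ := by
              apply add_le_add_right
              rw [Finset.sum_const, Finset.card_univ, Fintype.card_fin, nsmul_eq_mul]
              rw [ENNReal.mul_div_cancel (by exact_mod_cast Nat.pos_iff_ne_zero.mp hNpos)
                (ENNReal.natCast_ne_top _)]
      have hfle1 : ENNReal.ofReal (f t) ≤ 1 := ENNReal.ofReal_le_one.mpr (hm.2.2.1 t ht).2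
      calc ENNReal.ofReal (f t) * m A
          ≤ ENNReal.ofReal (f t) * (∑ i, m (F i) + δ) := mul_le_mul_right h1 _
      _ = ∑ i, ENNReal.ofReal (f t) * m (F i) + ENNReal.ofReal (f t) * δ := by
          rw [mul_add, Finset.mul_sum]
      _ ≤ ∑ i, m (S i) + δ := by
          refine add_le_add (Finset.sum_le_sum (fun i _ => hSest i)) ?_
          calc ENNReal.ofReal (f t) * δ ≤ 1 * δ := mul_le_mul_left hfle1 δ
          _ = δ := one_mul δ
      _ = m (⋃ i, S i) + δ := by rw [hUm]
    · -- App property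
      intro z hzU
      obtain ⟨i, hzi⟩ := Set.mem_iUnion.mp hzU
      rw [hSchar i] at hzi
      obtain ⟨x, hxF, e1, e2⟩ := hzi
      refine ⟨x, (hC'subA i) (hFsub i hxF), yv i, hyvP2 i, e1, e2, ?_⟩
      intro y hy
      have hycov := hs_cov hy
      rw [Set.mem_iUnion₂] at hycov
      obtain ⟨p, hps, hyp⟩ := hycov
      obtain ⟨jn, hjn⟩ := List.get_of_mem ((hLmem p).mpr hps)
      refine ⟨yv jn, hyvP2 jn, ?_, ?_⟩
      · have : yv jn = p := hjn
        rw [this, dist_comm]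
        exact le_of_lt (by simpa [Metric.mem_ball] using hyp)
      · have := hCg i x (hC'subC i (hFsub i hxF)) jn
        simpa [hgdef] using this
  -- ===== assembly =====
  by_cases hmT : m T = ⊤
  · rw [hmT]; exact le_top
  refine ENNReal.le_of_forall_pos_le_add ?_
  intro ε hε _
  have hδ : (ε : ENNReal) ≠ 0 := by
    simpa using (ne_of_gt hε)
  choose U hUBIG hUmeas hUest hUApp using key ε hδ
  set Cn : ℕ → Set X := fun n => closure (⋃ k, ⋃ (_ : n ≤ k), U k) with hCndef
  have hCcl : ∀ n, IsClosed (Cn n) := fun n => isClosed_closure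
  have hCBIG : ∀ n, Cn n ⊆ BIG := fun n => closure_minimal
    (Set.iUnion₂_subset fun k _ => hUBIG k) hBIGcpt.isClosed
  have hCcpt : ∀ n, IsCompact (Cn n) := fun n =>
    hBIGcpt.of_isClosed_subset (hCcl n) (hCBIG n)
  have hCanti : Antitone Cn := by
    intro i j hij
    apply closure_mono
    refine Set.iUnion₂_subset fun k hk => ?_
    exact Set.subset_iUnion₂ (s := fun k _ => U k) k (hij.trans hk)
  have hUsub : ∀ n, U n ⊆ Cn n := fun n =>
    (Set.subset_iUnion₂ (s := fun k _ => U k) n le_rfl).trans subset_closure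
  have hmC : ∀ n, ENNReal.ofReal (f t) * m A ≤ m (Cn n) + ε :=
    fun n => (hUest n).trans (add_le_add_left (measure_mono (hUsub n)) _)
  have hlim : Filter.Tendsto (fun n => m (Cn n)) Filter.atTop (nhds (m (⋂ n, Cn n))) := by
    apply tendsto_measure_iInter_atTop
    · exact fun n => ((hCcl n).measurableSet).nullMeasurableSet
    · exact hCanti
    · exact ⟨0, ((hCcpt 0).measure_lt_top).ne⟩
  have hIle : ENNReal.ofReal (f t) * m A ≤ m (⋂ n, Cn n) + ε := by
    have htend : Filter.Tendsto (fun n => m (Cn n) + (ε : ENNReal)) Filter.atTop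
        (nhds (m (⋂ n, Cn n) + ε)) := hlim.add tendsto_const_nhds
    exact ge_of_tendsto' htend hmC
  -- ===== the limit inclusion =====
  have hsub : (⋂ n, Cn n) ⊆ T := by
    intro z hz
    have hdata : ∀ nn : ℕ, ∃ w xx uu, dist z w < 1/(nn+1) ∧ xx ∈ A ∧ uu ∈ P2 ∧
        dist xx w = t * dist xx uu ∧ dist w uu = (1 - t) * dist xx uu ∧
        ∀ y ∈ P2, ∃ y' ∈ P2, dist y' y ≤ 1/(nn+1) ∧
          h (dist xx uu) - φc uu ≤ h (dist xx y') - φc y' := by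
      intro nn
      have hzC : z ∈ Cn nn := Set.mem_iInter.mp hz nn
      have hpos : (0:ℝ) < 1/(nn+1) := by positivity
      obtain ⟨w, hwmem, hwd⟩ := Metric.mem_closure_iff.mp hzC (1/(nn+1)) hpos
      rw [Set.mem_iUnion₂] at hwmem
      obtain ⟨k, hk, hw⟩ := hwmem
      obtain ⟨xx, hxA, uu, huP2, e1, e2, happ⟩ := hUApp k w hw
      refine ⟨w, xx, uu, hwd, hxA, huP2, e1, e2, ?_⟩
      intro y hy
      obtain ⟨y', hy'P2, hy'd, hy'ineq⟩ := happ y hy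
      refine ⟨y', hy'P2, hy'd.trans ?_, hy'ineq⟩
      apply one_div_le_one_div_of_le (by positivity)
      exact_mod_cast by exact_mod_cast add_le_add_left (Nat.cast_le.mpr hk) 1
    choose w xx uu hwd hxA huP2 he1 he2 happ using hdata
    obtain ⟨q, hqmem, ψ, hψmono, hψtend⟩ := (hA.prod hP2cpt).tendsto_subseq
      (fun nn => Set.mk_mem_prod (hxA nn) (huP2 nn))
    have hxtend : Filter.Tendsto (fun j => xx (ψ j)) Filter.atTop (nhds q.1) :=
      (continuous_fst.tendsto q).comp hψtend
    have hutend : Filter.Tendsto (fun j => uu (ψ j)) Filter.atTop (nhds q.2) :=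
      (continuous_snd.tendsto q).comp hψtend
    have hone : Filter.Tendsto (fun j : ℕ => 1/((j:ℝ)+1)) Filter.atTop (nhds 0) :=
      tendsto_one_div_add_atTop_nhds_zero_nat
    have hbound : ∀ j : ℕ, 1/((ψ j : ℝ)+1) ≤ 1/((j:ℝ)+1) := by
      intro j
      apply one_div_le_one_div_of_le (by positivity)
      have hja : j ≤ ψ j := hψmono.le_apply
      exact_mod_cast add_le_add_left (Nat.cast_le.mpr hja) 1
    have hwtend : Filter.Tendsto (fun j => w (ψ j)) Filter.atTop (nhds z) := by
      rw [tendsto_iff_dist_tendsto_zero]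
      apply squeeze_zero (fun j => dist_nonneg)
        (g := fun j : ℕ => 1/((j:ℝ)+1)) ?_ hone
      intro j
      rw [dist_comm]
      exact (le_of_lt (hwd (ψ j))).trans (hbound j)
    have hde1 : dist q.1 z = t * dist q.1 q.2 := by
      have hL : Filter.Tendsto (fun j => dist (xx (ψ j)) (w (ψ j))) Filter.atTop
          (nhds (dist q.1 z)) := hxtend.dist hwtend
      have hR : Filter.Tendsto (fun j => t * dist (xx (ψ j)) (uu (ψ j))) Filter.atTop
          (nhds (t * dist q.1 q.2)) := tendsto_const_nhds.mul (hxtend.dist hutend)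
      exact tendsto_nhds_unique (hL.congr (fun j => he1 (ψ j))) hR
    have hde2 : dist z q.2 = (1 - t) * dist q.1 q.2 := by
      have hL : Filter.Tendsto (fun j => dist (w (ψ j)) (uu (ψ j))) Filter.atTop
          (nhds (dist z q.2)) := hwtend.dist hutend
      have hR : Filter.Tendsto (fun j => (1 - t) * dist (xx (ψ j)) (uu (ψ j))) Filter.atTop
          (nhds ((1 - t) * dist q.1 q.2)) := tendsto_const_nhds.mul (hxtend.dist hutend)
      exact tendsto_nhds_unique (hL.congr (fun j => he2 (ψ j))) hR
    have hq1A : q.1 ∈ A := hqmem.1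
    have hq2P2 : q.2 ∈ P2 := hqmem.2
    have hq1K : q.1 ∈ K := hAK hq1A
    have hq2K : q.2 ∈ K := hP2K hq2P2
    -- auxiliary: tendsto of h ∘ dist and φc along sequences
    have hhtend : ∀ (v : ℕ → X) (vlim : X), Filter.Tendsto v Filter.atTop (nhds vlim) →
        Filter.Tendsto (fun j => h (dist (xx (ψ j)) (v j))) Filter.atTop
          (nhds (h (dist q.1 vlim))) := by
      intro v vlim hv
      have hd : Filter.Tendsto (fun j => dist (xx (ψ j)) (v j)) Filter.atTop
          (nhds (dist q.1 vlim)) := hxtend.dist hv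
      have hdw : Filter.Tendsto (fun j => dist (xx (ψ j)) (v j)) Filter.atTop
          (nhdsWithin (dist q.1 vlim) (Set.Ici 0)) :=
        tendsto_nhdsWithin_of_tendsto_nhds_of_eventually_within _ hd
          (Filter.Eventually.of_forall (fun j => dist_nonneg))
      exact (hhc _ dist_nonneg).tendsto.comp hdw
    have hφctend : ∀ (v : ℕ → X) (vlim : X), vlim ∈ K → (∀ j, v j ∈ K) →
        Filter.Tendsto v Filter.atTop (nhds vlim) →
        Filter.Tendsto (fun j => φc (v j)) Filter.atTop (nhds (φc vlim)) := by
      intro v vlim hvK hvjK hv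
      have hdw : Filter.Tendsto v Filter.atTop (nhdsWithin vlim K) :=
        tendsto_nhdsWithin_of_tendsto_nhds_of_eventually_within _ hv
          (Filter.Eventually.of_forall hvjK)
      exact (hφc vlim hvK).tendsto.comp hdw
    have hcontact : ∀ y ∈ P2, h (dist q.1 q.2) - φc q.2 ≤ h (dist q.1 y) - φc y := by
      intro y hy
      choose y' hy'P2 hy'd hy'ineq using fun nn => happ nn y hy
      have hy'tend : Filter.Tendsto (fun j => y' (ψ j)) Filter.atTop (nhds y) := by
        rw [tendsto_iff_dist_tendsto_zero]
        apply squeeze_zero (fun j => dist_nonneg) (g := fun j : ℕ => 1/((j:ℝ)+1)) ?_ hone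
        intro j
        exact (hy'd (ψ j)).trans (hbound j)
      have hLtend : Filter.Tendsto
          (fun j => h (dist (xx (ψ j)) (uu (ψ j))) - φc (uu (ψ j))) Filter.atTop
          (nhds (h (dist q.1 q.2) - φc q.2)) :=
        (hhtend _ _ hutend).sub (hφctend _ _ hq2K (fun j => hP2K (huP2 (ψ j))) hutend)
      have hRtend : Filter.Tendsto
          (fun j => h (dist (xx (ψ j)) (y' (ψ j))) - φc (y' (ψ j))) Filter.atTop
          (nhds (h (dist q.1 y) - φc y)) :=
        (hhtend _ _ hy'tend).sub (hφctend _ _ (hP2K hy) (fun j => hP2K (hy'P2 (ψ j))) hy'tend)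
      exact le_of_tendsto_of_tendsto' hLtend hRtend (fun j => hy'ineq (ψ j))
    -- contact equality via partner of q.1
    obtain ⟨p, hpΛ, hp1⟩ := hAsub hq1A
    have hp2P2 : p.2 ∈ P2 := ⟨p, hpΛ, rfl⟩
    have hcontΛ := hΛΓ hpΛ
    have hφq : φ q.1 + φc p.2 = h (dist q.1 p.2) := by rw [← hp1]; exact hcontΛ.2.2
    have hle := hcontact p.2 hp2P2
    have hle2 := hpot q.1 hq1K q.2 hq2K
    have heqc : φ q.1 + φc q.2 = h (dist q.1 q.2) := le_antisymm hle2 (by linarith)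
    obtain ⟨γ, hγg, hγ0, hγ1, hγt⟩ := exists_geodesic_through hgeo ht hde1 hde2
    refine ⟨γ, hγg, by rwa [hγ0], ?_, hγt⟩
    rw [hγ0, hγ1]
    exact ⟨Set.mk_mem_prod (hAsub hq1A) hq2P2, hq1K, hq2K, heqc⟩
  calc ENNReal.ofReal (f t) * m A ≤ m (⋂ n, Cn n) + ε := hIle
  _ ≤ m T + ε := add_le_add_left (measure_mono hsub) _
end

section
/- Let Λ⊂Γ be compact, {y_i}_{i∈ℕ}⊂P₂(Λ) dense in P₂(Λ), and for n∈ℕ set E_n(i):={x∈P₁(Λ) : c(x,y_i)−φ^c(y_i) ≤ c(x,y_j)−φ^c(y_j), j=1,…,n} and Λ_n:=⋃_{i=1}^n E_n(i)×{y_i}. If a subsequence Λ_{n_k} converges in the Hausdorff distance on compact subsets of K×K to a compact set Θ, then Θ ⊂ (P₁(Λ)×P₂(Λ))∩Γ; that is, every (x,y)∈Θ satisfies x∈P₁(Λ), y∈P₂(Λ) and φ(x)+φ^c(y)=c(x,y). -/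
open Set Metric Filter

open scoped Topology

private lemma convexOn_mono_continuousOn {h : ℝ → ℝ} (hc : ConvexOn ℝ (Set.Ici 0) h)
    (hm : MonotoneOn h (Set.Ici 0)) : ContinuousOn h (Set.Ici 0) := by
  intro a ha
  rcases eq_or_lt_of_le (mem_Ici.1 ha) with h0 | hlt
  · subst h0
    have hub : ∀ t ∈ Ico (0:ℝ) 1, h t ≤ (1 - t) * h 0 + t * h 1 := by
      intro t ht
      have key := hc.2 (mem_Ici.2 (le_refl (0:ℝ))) (mem_Ici.2 (zero_le_one (α := ℝ)))
        (sub_nonneg.2 ht.2.le) ht.1 (sub_add_cancel 1 t)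
      simpa using key
    have hlb : ∀ t ∈ Ici (0:ℝ), h 0 ≤ h t := fun t ht =>
      hm (mem_Ici.2 le_rfl) ht (mem_Ici.1 ht)
    have hU : Tendsto (fun t : ℝ => (1 - t) * h 0 + t * h 1) (𝓝[Ici (0:ℝ)] 0)
        (𝓝 (h 0)) := by
      have hcont : Continuous (fun t : ℝ => (1 - t) * h 0 + t * h 1) := by continuity
      have := (hcont.tendsto 0).mono_left (nhdsWithin_le_nhds (s := Ici (0:ℝ)))
      simpa using this
    have : Tendsto h (𝓝[Ici (0:ℝ)] 0) (𝓝 (h 0)) := by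
      refine tendsto_of_tendsto_of_tendsto_of_le_of_le' tendsto_const_nhds hU ?_ ?_
      · filter_upwards [self_mem_nhdsWithin] with t ht using hlb t ht
      · filter_upwards [self_mem_nhdsWithin,
          mem_nhdsWithin_of_mem_nhds (Iio_mem_nhds (zero_lt_one))] with t ht ht1
        exact hub t ⟨ht, ht1⟩
    exact this
  · have hcI := hc.continuousOn_interior
    rw [interior_Ici] at hcI
    exact (hcI.continuousAt (Ioi_mem_nhds hlt)).continuousWithinAt

/-- Hausdorff limits of the approximating sets `Λ_{n_k}` are contained in
`(P₁(Λ) × P₂(Λ)) ∩ Γ`.  (Hausdorff convergence is stated for Mathlib's product metric on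
`X × X`, which is bi-Lipschitz equivalent to the metric `√(d₁² + d₂²)`.) -/
theorem hausdorff_limit_in_contact_set
    {X : Type*} [MetricSpace X] [CompleteSpace X] [TopologicalSpace.SeparableSpace X]
    (h : ℝ → ℝ) (hconv : StrictConvexOn ℝ (Set.Ici (0:ℝ)) h)
    (hmono : MonotoneOn h (Set.Ici (0:ℝ))) (hpos : ∀ x ∈ Set.Ici (0:ℝ), 0 ≤ h x)
    (K : Set X) (hK : IsCompact K)
    (φ φc : X → ℝ) (hφ : ContinuousOn φ K) (hφc : ContinuousOn φc K)
    (hpot : ∀ x ∈ K, ∀ y ∈ K, φ x + φc y ≤ h (dist x y))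
    (Λ : Set (X × X)) (hΛcpt : IsCompact Λ) (hΛΓ : Λ ⊆ contactSet h φ φc K)
    (y : ℕ → X) (hyin : ∀ i, y i ∈ Prod.snd '' Λ)
    (hydense : Prod.snd '' Λ ⊆ closure (Set.range y))
    (nseq : ℕ → ℕ) (hnseq : StrictMono nseq)
    (Θ : Set (X × X)) (hΘcpt : IsCompact Θ) (hΘK : Θ ⊆ K ×ˢ K)
    (hconv' : Tendsto (fun k => hausdorffDist (Λn h φc Λ y (nseq k)) Θ) atTop (nhds 0)) :
    Θ ⊆ ((Prod.fst '' Λ) ×ˢ (Prod.snd '' Λ)) ∩ contactSet h φ φc K := by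
  have hconth : ContinuousOn h (Set.Ici 0) := convexOn_mono_continuousOn hconv.convexOn hmono
  have hP1K : Prod.fst '' Λ ⊆ K := by rintro _ ⟨q, hq, rfl⟩; exact (hΛΓ hq).1
  have hP2K : Prod.snd '' Λ ⊆ K := by rintro _ ⟨q, hq, rfl⟩; exact (hΛΓ hq).2.1
  have hP1c : IsCompact (Prod.fst '' Λ) := hΛcpt.image continuous_fst
  have hP2c : IsCompact (Prod.snd '' Λ) := hΛcpt.image continuous_snd
  have hΛne : (Prod.fst '' Λ).Nonempty := by
    obtain ⟨q, hq, -⟩ := hyin 0; exact ⟨q.1, ⟨q, hq, rfl⟩⟩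
  have hΛnK : ∀ n, Λn h φc Λ y n ⊆ K ×ˢ K := by
    intro n p hp
    simp only [Λn, mem_iUnion] at hp
    obtain ⟨i, hi, hp⟩ := hp
    refine ⟨hP1K hp.1.1, ?_⟩
    have h2 : p.2 = y i := hp.2
    rw [h2]; exact hP2K (hyin i)
  have hΛnne : ∀ n, 0 < n → (Λn h φc Λ y n).Nonempty := by
    intro n hn
    obtain ⟨x₁, hx₁⟩ := hΛne
    obtain ⟨i, hi, hmin⟩ := Finset.exists_min_image (Finset.range n)
      (fun j => h (dist x₁ (y j)) - φc (y j)) ⟨0, Finset.mem_range.2 hn⟩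
    refine ⟨(x₁, y i), ?_⟩
    simp only [Λn, mem_iUnion]
    exact ⟨i, Finset.mem_range.1 hi,
      ⟨⟨hx₁, fun j hj => hmin j (Finset.mem_range.2 hj)⟩, rfl⟩⟩
  -- generic composition lemmas
  have hhcomp : ∀ {f : ℕ → ℝ} {a : ℝ}, Tendsto f atTop (𝓝 a) → (∀ k, 0 ≤ f k) → 0 ≤ a →
      Tendsto (fun k => h (f k)) atTop (𝓝 (h a)) := by
    intro f a hf hf0 ha
    exact (hconth a ha).tendsto.comp
      (tendsto_nhdsWithin_of_tendsto_nhds_of_eventually_within f hf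
        (Eventually.of_forall hf0))
  have hφccomp : ∀ {g : ℕ → X} {b : X}, Tendsto g atTop (𝓝 b) → (∀ k, g k ∈ K) → b ∈ K →
      Tendsto (fun k => φc (g k)) atTop (𝓝 (φc b)) := by
    intro g b hg hgK hb
    exact (hφc b hb).tendsto.comp
      (tendsto_nhdsWithin_of_tendsto_nhds_of_eventually_within g hg
        (Eventually.of_forall hgK))
  rintro ⟨x₀, y₀⟩ hp
  obtain ⟨hx₀K, hy₀K⟩ := hΘK hp
  have hΘne : Θ.Nonempty := ⟨(x₀, y₀), hp⟩
  have hKKb : Bornology.IsBounded (K ×ˢ K) := (hK.prod hK).isBounded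
  have hchoice : ∀ k : ℕ, ∃ q ∈ Λn h φc Λ y (nseq (k+1)),
      dist (x₀, y₀) q < hausdorffDist (Λn h φc Λ y (nseq (k+1))) Θ + 1/(k+1) := by
    intro k
    have hk1 : 0 < nseq (k+1) := lt_of_lt_of_le (Nat.succ_pos k) hnseq.le_apply
    have hne := hΛnne _ hk1
    have hfin : Metric.hausdorffEDist Θ (Λn h φc Λ y (nseq (k+1))) ≠ ⊤ := by
      rw [EMetric.hausdorffEdist_comm]
      exact Metric.hausdorffEdist_ne_top_of_nonempty_of_bounded hne hΘne
        (hKKb.subset (hΛnK _)) (hKKb.subset hΘK)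
    have hinf : infDist (x₀, y₀) (Λn h φc Λ y (nseq (k+1))) ≤
        hausdorffDist (Λn h φc Λ y (nseq (k+1))) Θ := by
      rw [Metric.hausdorffDist_comm]
      exact Metric.infDist_le_hausdorffDist_of_mem hp hfin
    have hlt : infDist (x₀, y₀) (Λn h φc Λ y (nseq (k+1))) <
        hausdorffDist (Λn h φc Λ y (nseq (k+1))) Θ + 1/(k+1) := by
      have : (0:ℝ) < 1/(k+1) := by positivity
      linarith
    exact (Metric.infDist_lt_iff hne).1 hlt
  choose q hqmem hqdist using hchoice
  have hqtend : Tendsto q atTop (𝓝 (x₀, y₀)) := by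
    rw [tendsto_iff_dist_tendsto_zero]
    refine squeeze_zero (g := fun k => hausdorffDist (Λn h φc Λ y (nseq (k+1))) Θ + 1/((k:ℝ)+1))
      (fun k => dist_nonneg) (fun k => ?_) ?_
    · rw [dist_comm]; exact (hqdist k).le
    · have h1 : Tendsto (fun k => hausdorffDist (Λn h φc Λ y (nseq (k+1))) Θ)
          atTop (𝓝 0) := hconv'.comp (tendsto_add_atTop_nat 1)
      have h2 : Tendsto (fun k : ℕ => 1/((k:ℝ)+1)) atTop (𝓝 0) :=
        tendsto_one_div_add_atTop_nhds_zero_nat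
      simpa using h1.add h2
  have hqm : ∀ k, ∃ i < nseq (k+1),
      (q k).1 ∈ En h φc Λ y (nseq (k+1)) i ∧ (q k).2 = y i := by
    intro k
    have hm := hqmem k
    simp only [Λn, mem_iUnion] at hm
    obtain ⟨i, hi, h1⟩ := hm
    exact ⟨i, hi, h1.1, h1.2⟩
  choose ik hik hmemE hsnd using hqm
  have hq1 : Tendsto (fun k => (q k).1) atTop (𝓝 x₀) :=
    (continuous_fst.tendsto _).comp hqtend
  have hq2 : Tendsto (fun k => (q k).2) atTop (𝓝 y₀) :=
    (continuous_snd.tendsto _).comp hqtend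
  have hq2K : ∀ k, (q k).2 ∈ K := by
    intro k; rw [hsnd k]; exact hP2K (hyin (ik k))
  have hx₀mem : x₀ ∈ Prod.fst '' Λ :=
    hP1c.isClosed.mem_of_tendsto hq1 (Eventually.of_forall fun k => (hmemE k).1)
  have hy₀mem : y₀ ∈ Prod.snd '' Λ := by
    refine hP2c.isClosed.mem_of_tendsto hq2 (Eventually.of_forall fun k => ?_)
    rw [hsnd k]; exact hyin (ik k)
  have claimA : ∀ j, h (dist x₀ y₀) - φc y₀ ≤ h (dist x₀ (y j)) - φc (y j) := by
    intro j
    have hev : ∀ᶠ k in atTop,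
        h (dist (q k).1 (q k).2) - φc ((q k).2) ≤ h (dist (q k).1 (y j)) - φc (y j) := by
      filter_upwards [eventually_ge_atTop j] with k hk
      have hj : j < nseq (k+1) := lt_of_lt_of_le (Nat.lt_succ_of_le hk) hnseq.le_apply
      have := (hmemE k).2 j hj
      rw [hsnd k]
      exact this
    have hL := (hhcomp (hq1.dist hq2) (fun k => dist_nonneg) dist_nonneg).sub
      (hφccomp hq2 hq2K hy₀K)
    have hR := (hhcomp (hq1.dist (tendsto_const_nhds (x := y j))) (fun k => dist_nonneg)
      dist_nonneg).sub (tendsto_const_nhds (x := φc (y j)))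
    exact le_of_tendsto_of_tendsto hL hR hev
  have claimB : ∀ z ∈ Prod.snd '' Λ, h (dist x₀ y₀) - φc y₀ ≤ h (dist x₀ z) - φc z := by
    intro z hz
    obtain ⟨u, humem, hulim⟩ := mem_closure_iff_seq_limit.1 (hydense hz)
    have hA : ∀ m, h (dist x₀ y₀) - φc y₀ ≤ h (dist x₀ (u m)) - φc (u m) := by
      intro m; obtain ⟨j, hj⟩ := humem m; rw [← hj]; exact claimA j
    have huK : ∀ m, u m ∈ K := by
      intro m; obtain ⟨j, hj⟩ := humem m; rw [← hj]; exact hP2K (hyin j)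
    have hR := (hhcomp ((tendsto_const_nhds (x := x₀)).dist hulim) (fun m => dist_nonneg)
      dist_nonneg).sub (hφccomp hulim huK (hP2K hz))
    exact le_of_tendsto_of_tendsto tendsto_const_nhds hR (Eventually.of_forall hA)
  refine ⟨⟨hx₀mem, hy₀mem⟩, hx₀K, hy₀K, ?_⟩
  obtain ⟨pz, hpzΛ, hpz1⟩ := hx₀mem
  have hΓ := (hΛΓ hpzΛ).2.2
  rw [hpz1] at hΓ
  have hB := claimB pz.2 ⟨pz, hpzΛ, rfl⟩
  have hle := hpot x₀ hx₀K y₀ hy₀K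
  linarith
end

section
/- Let (X,d) be a non-branching geodesic complete separable metric space, h:[0,∞)→[0,∞) strictly convex and non-decreasing, c(x,y):=h(d(x,y)), and let Γ⊂X×X be c-cyclically monotone. If Λ₁,Λ₂⊂Γ satisfy P₂(Λ₁)∩P₂(Λ₂)=∅, then for every A⊂X and every t∈(0,1) the evolution sets are disjoint: A_{t,Λ₁}∩A_{t,Λ₂}=∅. -/
open Set Metric

theorem disjoint_evolutions
    {X : Type*} [MetricSpace X] [CompleteSpace X] [TopologicalSpace.SeparableSpace X]
    (hgeo : GeodesicMetricSpace X) (hnb : NonBranching X)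
    (h : ℝ → ℝ) (hconv : StrictConvexOn ℝ (Set.Ici (0:ℝ)) h)
    (hmono : MonotoneOn h (Set.Ici (0:ℝ))) (hpos : ∀ x ∈ Set.Ici (0:ℝ), 0 ≤ h x)
    (Γ : Set (X × X)) (hΓ : CyclicallyMonotone (fun x y => h (dist x y)) Γ)
    (Λ₁ Λ₂ : Set (X × X)) (hΛ₁ : Λ₁ ⊆ Γ) (hΛ₂ : Λ₂ ⊆ Γ)
    (hdisj : (Prod.snd '' Λ₁) ∩ (Prod.snd '' Λ₂) = ∅)
    (A : Set X) (t : ℝ) (ht : t ∈ Set.Ioo (0:ℝ) 1) :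
    evoSet A Λ₁ t ∩ evoSet A Λ₂ t = ∅ := by
  ext z
  simp only [mem_inter_iff, mem_empty_iff_false, iff_false, not_and]
  rintro ⟨γ₁, hg1, hA1, hm1, hz1⟩ ⟨γ₂, hg2, hA2, hm2, hz2⟩
  obtain ⟨ht0, ht1⟩ := ht
  have h01 : (0:ℝ) ∈ Icc (0:ℝ) 1 := ⟨le_refl 0, zero_le_one⟩
  have h11 : (1:ℝ) ∈ Icc (0:ℝ) 1 := ⟨zero_le_one, le_refl 1⟩
  have htI : t ∈ Icc (0:ℝ) 1 := ⟨ht0.le, ht1.le⟩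
  have h1t : (0:ℝ) ≤ 1 - t := by linarith
  set d₁ := dist (γ₁ 0) (γ₁ 1) with hd₁def
  set d₂ := dist (γ₂ 0) (γ₂ 1) with hd₂def
  have hd₁0 : (0:ℝ) ≤ d₁ := dist_nonneg
  have hd₂0 : (0:ℝ) ≤ d₂ := dist_nonneg
  have hzz : γ₁ t = γ₂ t := hz1.trans hz2.symm
  -- geodesic distance computations
  have e1 : dist (γ₁ 0) (γ₁ t) = t * d₁ := by
    have := hg1 0 h01 t htI
    rwa [zero_sub, abs_neg, abs_of_nonneg ht0.le] at this
  have e2 : dist (γ₁ t) (γ₁ 1) = (1 - t) * d₁ := by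
    have := hg1 t htI 1 h11
    rwa [show |t - 1| = 1 - t by rw [abs_of_nonpos (by linarith)]; ring] at this
  have e3 : dist (γ₂ 0) (γ₂ t) = t * d₂ := by
    have := hg2 0 h01 t htI
    rwa [zero_sub, abs_neg, abs_of_nonneg ht0.le] at this
  have e4 : dist (γ₂ t) (γ₂ 1) = (1 - t) * d₂ := by
    have := hg2 t htI 1 h11
    rwa [show |t - 1| = 1 - t by rw [abs_of_nonpos (by linarith)]; ring] at this
  -- cyclical monotonicity with the two pairs
  have hcm : h d₁ + h d₂ ≤ h (dist (γ₂ 0) (γ₁ 1)) + h (dist (γ₁ 0) (γ₂ 1)) := by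
    have := hΓ 1 ![(γ₁ 0, γ₁ 1), (γ₂ 0, γ₂ 1)] (by
      intro i
      fin_cases i
      · exact hΛ₁ hm1
      · exact hΛ₂ hm2)
    simpa [Fin.sum_univ_two, show (1 + 1 : Fin 2) = 0 from rfl] using this
  -- triangle inequalities through the common midpoint
  have ta : dist (γ₂ 0) (γ₁ 1) ≤ t * d₂ + (1 - t) * d₁ := by
    calc dist (γ₂ 0) (γ₁ 1) ≤ dist (γ₂ 0) (γ₂ t) + dist (γ₂ t) (γ₁ 1) := dist_triangle _ _ _
    _ = t * d₂ + (1 - t) * d₁ := by rw [e3, ← hzz, e2]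
  have tb : dist (γ₁ 0) (γ₂ 1) ≤ t * d₁ + (1 - t) * d₂ := by
    calc dist (γ₁ 0) (γ₂ 1) ≤ dist (γ₁ 0) (γ₁ t) + dist (γ₁ t) (γ₂ 1) := dist_triangle _ _ _
    _ = t * d₁ + (1 - t) * d₂ := by rw [e1, hzz, e4]
  have hm1' : (0:ℝ) ≤ t * d₂ + (1 - t) * d₁ := by
    have := mul_nonneg ht0.le hd₂0; have := mul_nonneg h1t hd₁0; linarith
  have hm2' : (0:ℝ) ≤ t * d₁ + (1 - t) * d₂ := by
    have := mul_nonneg ht0.le hd₁0; have := mul_nonneg h1t hd₂0; linarith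
  have hha : h (dist (γ₂ 0) (γ₁ 1)) ≤ h (t * d₂ + (1 - t) * d₁) :=
    hmono (mem_Ici.mpr dist_nonneg) (mem_Ici.mpr hm1') ta
  have hhb : h (dist (γ₁ 0) (γ₂ 1)) ≤ h (t * d₁ + (1 - t) * d₂) :=
    hmono (mem_Ici.mpr dist_nonneg) (mem_Ici.mpr hm2') tb
  -- the two geodesics have equal length
  have heq : d₂ = d₁ := by
    by_contra hne
    have hc1 : h (t * d₂ + (1 - t) * d₁) < t * h d₂ + (1 - t) * h d₁ := by
      have := hconv.2 (mem_Ici.mpr hd₂0) (mem_Ici.mpr hd₁0) hne ht0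
        (show (0:ℝ) < 1 - t by linarith) (show t + (1 - t) = 1 by ring)
      simpa only [smul_eq_mul] using this
    have hc2 : h (t * d₁ + (1 - t) * d₂) < t * h d₁ + (1 - t) * h d₂ := by
      have := hconv.2 (mem_Ici.mpr hd₁0) (mem_Ici.mpr hd₂0) (Ne.symm hne) ht0
        (show (0:ℝ) < 1 - t by linarith) (show t + (1 - t) = 1 by ring)
      simpa only [smul_eq_mul] using this
    nlinarith [hcm, hha, hhb]
  -- hence the cross distance equals the common length
  have hbL : dist (γ₁ 0) (γ₂ 1) = d₁ := by
    have htb' : dist (γ₁ 0) (γ₂ 1) ≤ d₁ := by rw [heq] at tb; linarith [tb]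
    have hta' : dist (γ₂ 0) (γ₁ 1) ≤ d₁ := by rw [heq] at ta; linarith [ta]
    have hhaL : h (dist (γ₂ 0) (γ₁ 1)) ≤ h d₁ :=
      hmono (mem_Ici.mpr dist_nonneg) (mem_Ici.mpr hd₁0) hta'
    have hhbL : h (dist (γ₁ 0) (γ₂ 1)) ≤ h d₁ :=
      hmono (mem_Ici.mpr dist_nonneg) (mem_Ici.mpr hd₁0) htb'
    have hbh : h (dist (γ₁ 0) (γ₂ 1)) = h d₁ := by
      rw [heq] at hcm; linarith
    by_contra hne
    have hblt : dist (γ₁ 0) (γ₂ 1) < d₁ := lt_of_le_of_ne htb' hne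
    have hmid : h ((1:ℝ)/2 * dist (γ₁ 0) (γ₂ 1) + (1:ℝ)/2 * d₁)
        < (1:ℝ)/2 * h (dist (γ₁ 0) (γ₂ 1)) + (1:ℝ)/2 * h d₁ := by
      have := hconv.2 (mem_Ici.mpr dist_nonneg) (mem_Ici.mpr hd₁0) hne
        (show (0:ℝ) < 1/2 by norm_num) (show (0:ℝ) < 1/2 by norm_num)
        (show (1:ℝ)/2 + 1/2 = 1 by norm_num)
      simpa only [smul_eq_mul] using this
    have hmid0 : (0:ℝ) ≤ (1:ℝ)/2 * dist (γ₁ 0) (γ₂ 1) + (1:ℝ)/2 * d₁ := by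
      have := dist_nonneg (x := γ₁ 0) (y := γ₂ 1); linarith
    have hmono' : h (dist (γ₁ 0) (γ₂ 1)) ≤ h ((1:ℝ)/2 * dist (γ₁ 0) (γ₂ 1) + (1:ℝ)/2 * d₁) :=
      hmono (mem_Ici.mpr dist_nonneg) (mem_Ici.mpr hmid0) (by linarith)
    linarith
  -- cross distances along the concatenated curve
  have cross : ∀ s ∈ Icc (0:ℝ) 1, s ≤ t → ∀ u ∈ Icc (0:ℝ) 1, t ≤ u →
      dist (γ₁ s) (γ₂ u) = (u - s) * d₁ := by
    intro s hs hst u hu htu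
    have c1 : dist (γ₁ s) (γ₁ t) = (t - s) * d₁ := by
      have := hg1 s hs t htI
      rwa [show |s - t| = t - s by rw [abs_of_nonpos (by linarith)]; ring] at this
    have c2 : dist (γ₂ t) (γ₂ u) = (u - t) * d₂ := by
      have := hg2 t htI u hu
      rwa [show |t - u| = u - t by rw [abs_of_nonpos (by linarith)]; ring] at this
    have c3 : dist (γ₁ 0) (γ₁ s) = s * d₁ := by
      have := hg1 0 h01 s hs
      rwa [zero_sub, abs_neg, abs_of_nonneg hs.1] at this
    have c4 : dist (γ₂ u) (γ₂ 1) = (1 - u) * d₂ := by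
      have := hg2 u hu 1 h11
      rwa [show |u - 1| = 1 - u by rw [abs_of_nonpos (by linarith [hu.2])]; ring] at this
    have upper : dist (γ₁ s) (γ₂ u) ≤ (u - s) * d₁ := by
      calc dist (γ₁ s) (γ₂ u) ≤ dist (γ₁ s) (γ₁ t) + dist (γ₁ t) (γ₂ u) := dist_triangle _ _ _
      _ = (t - s) * d₁ + (u - t) * d₂ := by rw [c1, hzz, c2]
      _ = (u - s) * d₁ := by rw [heq]; ring
    have lower : (u - s) * d₁ ≤ dist (γ₁ s) (γ₂ u) := by
      have tri : dist (γ₁ 0) (γ₂ 1) ≤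
          dist (γ₁ 0) (γ₁ s) + dist (γ₁ s) (γ₂ u) + dist (γ₂ u) (γ₂ 1) :=
        dist_triangle4 _ _ _ _
      rw [hbL, c3, c4, heq] at tri
      linarith
    linarith
  -- the concatenated curve
  set σ : ℝ → X := fun s => if s ≤ t then γ₁ s else γ₂ s with hσdef
  have hσ0 : σ 0 = γ₁ 0 := if_pos ht0.le
  have hσ1 : σ 1 = γ₂ 1 := if_neg (not_le.mpr ht1)
  have hσL : dist (σ 0) (σ 1) = d₁ := by rw [hσ0, hσ1, hbL]
  have hσgeo : IsGeodesic σ := by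
    intro s hs u hu
    rw [hσL]
    by_cases hst : s ≤ t <;> by_cases hut : u ≤ t
    · simp only [hσdef, if_pos hst, if_pos hut]
      exact hg1 s hs u hu
    · simp only [hσdef, if_pos hst, if_neg hut]
      rw [cross s hs hst u hu (le_of_not_ge hut)]
      rw [abs_of_nonpos (by linarith [le_of_not_ge hut])]
      ring
    · simp only [hσdef, if_neg hst, if_pos hut]
      rw [dist_comm, cross u hu hut s hs (le_of_not_ge hst)]
      rw [abs_of_nonneg (by linarith [le_of_not_ge hst])]
    · simp only [hσdef, if_neg hst, if_neg hut]
      rw [hg2 s hs u hu, ← hd₂def, heq]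
  -- non-branching forces the endpoints to coincide
  have hagree : ∀ s ∈ Icc (0:ℝ) t, γ₁ s = σ s := by
    intro s hs
    simp only [hσdef, if_pos hs.2]
  have hall := hnb γ₁ σ hg1 hσgeo t ⟨ht0, ht1⟩ hagree
  have hend : γ₁ 1 = γ₂ 1 := by
    have := hall 1 h11
    rwa [hσ1] at this
  -- contradiction with the disjointness of second projections
  have : γ₁ 1 ∈ (Prod.snd '' Λ₁) ∩ (Prod.snd '' Λ₂) :=
    ⟨⟨(γ₁ 0, γ₁ 1), hm1, rfl⟩, ⟨(γ₂ 0, γ₂ 1), hm2, hend.symm⟩⟩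
  rw [hdisj] at this
  exact this
end

section
/- Let X be a complete separable metric space, μ₀,μ₁ Borel probability measures on X, and c:X×X→[0,∞] Borel measurable. Suppose the Kantorovich problem inf{∫c dπ : π∈Π(μ₀,μ₁)} admits a minimizer with finite cost, and suppose every minimizer π is induced by a map, i.e. π=(id,T_π)_♯μ₀ for some Borel map T_π:X→X. Then the minimizer is unique: any two minimizers coincide. -/
open MeasureTheory

/-- `π` is a coupling of `(μ₀, μ₁)`: a probability measure on `X × X` with marginals
`μ₀` and `μ₁`. -/
def IsCoupling {X : Type*} [MeasurableSpace X] (π : Measure (X × X))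
    (μ₀ μ₁ : Measure X) : Prop :=
  IsProbabilityMeasure π ∧ π.map Prod.fst = μ₀ ∧ π.map Prod.snd = μ₁

/-- `π` is a minimizer (optimal transport plan) of the Kantorovich problem for `c`. -/
def IsOptimalPlan {X : Type*} [MeasurableSpace X] (c : X × X → ENNReal)
    (μ₀ μ₁ : Measure X) (π : Measure (X × X)) : Prop :=
  IsCoupling π μ₀ μ₁ ∧
    ∀ π' : Measure (X × X), IsCoupling π' μ₀ μ₁ → ∫⁻ p, c p ∂π ≤ ∫⁻ p, c p ∂π'

lemma coupling_on_graph {X : Type*} [MetricSpace X] [MeasurableSpace X] [BorelSpace X]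
    (π : Measure (X × X)) (μ₀ : Measure X) (T : X → X) (hT : Measurable T)
    (hfst : π.map Prod.fst = μ₀)
    (hnull : π {p : X × X | p.2 ≠ T p.1} = 0) :
    π = μ₀.map (fun x => (x, T x)) := by
  have hmeas : Measurable fun x : X => (x, T x) := measurable_id.prodMk hT
  ext s hs
  rw [Measure.map_apply hmeas hs]
  have key : ∀ᵐ p ∂π, p.2 = T p.1 := by
    rw [ae_iff]
    exact hnull
  have h1 : π s = π {p : X × X | (p.1, T p.1) ∈ s} := by
    apply measure_congr
    filter_upwards [key] with p hp
    have hpe : (p.1, T p.1) = p := Prod.ext rfl hp.symm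
    show (p ∈ s) = ((p.1, T p.1) ∈ s)
    rw [hpe]
  rw [h1]
  have h2 : {p : X × X | (p.1, T p.1) ∈ s} =
      Prod.fst ⁻¹' ((fun x => (x, T x)) ⁻¹' s) := rfl
  rw [h2, ← Measure.map_apply measurable_fst (hmeas hs), hfst]

theorem uniqueness_of_minimizer_when_induced_by_maps
    {X : Type*} [MetricSpace X] [CompleteSpace X] [TopologicalSpace.SeparableSpace X]
    [MeasurableSpace X] [BorelSpace X]
    (μ₀ μ₁ : Measure X) [IsProbabilityMeasure μ₀] [IsProbabilityMeasure μ₁]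
    (c : X × X → ENNReal) (hc : Measurable c)
    (hex : ∃ π : Measure (X × X), IsOptimalPlan c μ₀ μ₁ π ∧ ∫⁻ p, c p ∂π < ⊤)
    (hmaps : ∀ π : Measure (X × X), IsOptimalPlan c μ₀ μ₁ π →
      ∃ T : X → X, Measurable T ∧ π = μ₀.map (fun x => (x, T x))) :
    ∀ π π' : Measure (X × X), IsOptimalPlan c μ₀ μ₁ π → IsOptimalPlan c μ₀ μ₁ π' →
      π = π' := by
  intro π π' hπ hπ'
  -- the average is a coupling
  set σ : Measure (X × X) := (2⁻¹ : ENNReal) • (π + π') with hσ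
  obtain ⟨⟨hπprob, hπf, hπs⟩, hπopt⟩ := hπ
  obtain ⟨⟨hπ'prob, hπ'f, hπ's⟩, hπ'opt⟩ := hπ'
  have hcost : ∫⁻ p, c p ∂π = ∫⁻ p, c p ∂π' :=
    le_antisymm (hπopt π' ⟨hπ'prob, hπ'f, hπ's⟩) (hπ'opt π ⟨hπprob, hπf, hπs⟩)
  have hσcoupling : IsCoupling σ μ₀ μ₁ := by
    refine ⟨⟨?_⟩, ?_, ?_⟩
    · simp only [hσ, Measure.smul_apply, Measure.add_apply, measure_univ, smul_eq_mul]
      rw [← two_mul, ← mul_assoc, ENNReal.inv_mul_cancel two_ne_zero ENNReal.ofNat_ne_top,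
        one_mul]
    · rw [hσ, Measure.map_smul, Measure.map_add _ _ measurable_fst, hπf, hπ'f,
        ← two_smul ENNReal μ₀, smul_smul,
        ENNReal.inv_mul_cancel two_ne_zero ENNReal.ofNat_ne_top, one_smul]
    · rw [hσ, Measure.map_smul, Measure.map_add _ _ measurable_snd, hπs, hπ's,
        ← two_smul ENNReal μ₁, smul_smul,
        ENNReal.inv_mul_cancel two_ne_zero ENNReal.ofNat_ne_top, one_smul]
  have hσcost : ∫⁻ p, c p ∂σ = ∫⁻ p, c p ∂π := by
    rw [hσ, lintegral_smul_measure, lintegral_add_measure, ← hcost, ← two_mul,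
      smul_eq_mul, ← mul_assoc, ENNReal.inv_mul_cancel (two_ne_zero) (by norm_num), one_mul]
  have hσopt : IsOptimalPlan c μ₀ μ₁ σ := by
    refine ⟨hσcoupling, fun τ hτ => ?_⟩
    rw [hσcost]; exact hπopt τ hτ
  obtain ⟨T, hT, hTσ⟩ := hmaps σ hσopt
  -- σ is concentrated on the graph of T
  have hgraph : σ {p : X × X | p.2 ≠ T p.1} = 0 := by
    rw [hTσ, Measure.map_apply (show Measurable fun x : X => (x, T x) from measurable_id.prodMk hT)]
    · have : ((fun x : X => (x, T x)) ⁻¹' {p : X × X | p.2 ≠ T p.1}) = ∅ := by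
        ext x
        simp only [Set.mem_preimage, Set.mem_setOf_eq, ne_eq, not_not,
          Set.mem_empty_iff_false, iff_false]
      rw [this, measure_empty]
    · exact (MeasureTheory.StronglyMeasurable.measurableSet_eq_fun measurable_snd.stronglyMeasurable ((hT.comp measurable_fst).stronglyMeasurable)).compl
  have hπnull : π {p : X × X | p.2 ≠ T p.1} = 0 := by
    have := hgraph
    rw [hσ, Measure.smul_apply, Measure.add_apply, smul_eq_mul] at this
    have h2 : π {p : X × X | p.2 ≠ T p.1} + π' {p : X × X | p.2 ≠ T p.1} = 0 := by
      by_contra h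
      exact h (by
        have := congrArg (fun x => 2 * x) this
        simpa [← mul_assoc, ENNReal.mul_inv_cancel (two_ne_zero)
          (ENNReal.ofNat_ne_top)] using this)
    exact (add_eq_zero.mp h2).1
  have hπ'null : π' {p : X × X | p.2 ≠ T p.1} = 0 := by
    rw [hσ, Measure.smul_apply, Measure.add_apply, smul_eq_mul] at hgraph
    have h2 : π {p : X × X | p.2 ≠ T p.1} + π' {p : X × X | p.2 ≠ T p.1} = 0 := by
      by_contra h
      exact h (by
        have := congrArg (fun x => 2 * x) hgraph
        simpa [← mul_assoc, ENNReal.mul_inv_cancel (two_ne_zero)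
          (ENNReal.ofNat_ne_top)] using this)
    exact (add_eq_zero.mp h2).2
  rw [coupling_on_graph π μ₀ T hT hπf hπnull,
    coupling_on_graph π' μ₀ T hT hπ'f hπ'null]
end

section
/- Let (X,d) be a proper geodesic complete separable metric space, Λ⊂X×X compact and A⊂X compact. Then for every t∈[0,1] the evolution set A_{t,Λ} = e_t((e_0,e_1)^{-1}((A×X)∩Λ)) is compact, where e_t denotes evaluation of a geodesic at time t. -/
open Set Metric Filter Topology

lemma isGeodesic_of_le {X : Type*} [MetricSpace X] (γ : ℝ → X)
    (h : ∀ s ∈ Icc (0:ℝ) 1, ∀ s' ∈ Icc (0:ℝ) 1, s ≤ s' →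
      dist (γ s) (γ s') ≤ (s' - s) * dist (γ 0) (γ 1)) : IsGeodesic γ := by
  have key : ∀ s ∈ Icc (0:ℝ) 1, ∀ s' ∈ Icc (0:ℝ) 1, s ≤ s' →
      dist (γ s) (γ s') = (s' - s) * dist (γ 0) (γ 1) := by
    intro s hs s' hs' hss
    refine le_antisymm (h s hs s' hs' hss) ?_
    have h0s := h 0 (by norm_num) s hs hs.1
    have hs'1 := h s' hs' 1 (by norm_num) hs'.2
    have htri : dist (γ 0) (γ 1) ≤ dist (γ 0) (γ s) + dist (γ s) (γ s') + dist (γ s') (γ 1) :=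
      dist_triangle4 _ _ _ _
    nlinarith [dist_nonneg (x := γ 0) (y := γ 1)]
  intro s hs s' hs'
  rcases le_total s s' with h' | h'
  · rw [key s hs s' hs' h', abs_sub_comm, abs_of_nonneg (sub_nonneg.2 h')]
  · rw [dist_comm, key s' hs' s hs h', abs_of_nonneg (sub_nonneg.2 h')]

lemma exists_geodesic_through_s15 {X : Type*} [MetricSpace X] (hgeo : GeodesicMetricSpace X)
    (x y z : X) (t : ℝ) (ht0 : 0 ≤ t) (ht1 : t ≤ 1)
    (h1 : dist x z = t * dist x y) (h2 : dist z y = (1 - t) * dist x y) :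
    ∃ γ : ℝ → X, IsGeodesic γ ∧ γ 0 = x ∧ γ 1 = y ∧ γ t = z := by
  rcases eq_or_lt_of_le ht0 with h0 | h0
  · -- t = 0 : z = x
    obtain ⟨γ, hγ, hγ0, hγ1⟩ := hgeo x y
    have hzx : x = z := by
      have : dist x z = 0 := by rw [h1, ← h0, zero_mul]
      exact dist_eq_zero.mp this
    exact ⟨γ, hγ, hγ0, hγ1, by rw [← h0, hγ0, hzx]⟩
  rcases eq_or_lt_of_le ht1 with h1' | h1'
  · -- t = 1 : z = y
    obtain ⟨γ, hγ, hγ0, hγ1⟩ := hgeo x y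
    have hzy : z = y := by
      have : dist z y = 0 := by rw [h2, h1', sub_self, zero_mul]
      exact dist_eq_zero.mp this
    exact ⟨γ, hγ, hγ0, hγ1, by rw [h1', hγ1, hzy]⟩
  -- 0 < t < 1
  obtain ⟨γ₁, hγ₁, hγ₁0, hγ₁1⟩ := hgeo x z
  obtain ⟨γ₂, hγ₂, hγ₂0, hγ₂1⟩ := hgeo z y
  set D := dist x y with hD
  have hDnn : 0 ≤ D := dist_nonneg
  have ht' : (0:ℝ) < 1 - t := by linarith
  set g : ℝ → X := fun s => if s ≤ t then γ₁ (s / t) else γ₂ ((s - t) / (1 - t)) with hg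
  have hg0 : g 0 = x := by simp [hg, ht0, zero_div, hγ₁0]
  have hg1 : g 1 = y := by
    have : ¬ (1:ℝ) ≤ t := not_le.mpr h1'
    simp [hg, this, div_self ht'.ne', hγ₂1]
  have hgt : g t = z := by
    simp [hg, div_self h0.ne', hγ₁1]
  have hd1 : dist (γ₁ 0) (γ₁ 1) = t * D := by rw [hγ₁0, hγ₁1, h1]
  have hd2 : dist (γ₂ 0) (γ₂ 1) = (1 - t) * D := by rw [hγ₂0, hγ₂1, h2]
  have hgD : dist (g 0) (g 1) = D := by rw [hg0, hg1]
  refine ⟨g, ?_, hg0, hg1, hgt⟩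
  apply isGeodesic_of_le
  rw [hgD]
  intro s hs s' hs' hss
  -- distance from g s to z for s ≤ t, and for s ≥ t
  have mem1 : ∀ a, 0 ≤ a → a ≤ t → a / t ∈ Icc (0:ℝ) 1 :=
    fun a ha hat => ⟨div_nonneg ha h0.le, (div_le_one h0).mpr hat⟩
  have mem2 : ∀ a, t ≤ a → a ≤ 1 → (a - t) / (1 - t) ∈ Icc (0:ℝ) 1 :=
    fun a ha hat => ⟨div_nonneg (by linarith) ht'.le, (div_le_one ht').mpr (by linarith)⟩
  have left_z : ∀ a, 0 ≤ a → a ≤ t → dist (γ₁ (a / t)) z = (t - a) * D := by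
    intro a ha hat
    have := hγ₁ (a / t) (mem1 a ha hat) 1 (by norm_num)
    rw [← hγ₁1, this, hd1, abs_of_nonpos (by
      have : a / t ≤ 1 := (div_le_one h0).mpr hat; linarith)]
    field_simp
    ring
  have right_z : ∀ a, t ≤ a → a ≤ 1 → dist z (γ₂ ((a - t) / (1 - t))) = (a - t) * D := by
    intro a ha hat
    have := hγ₂ 0 (by norm_num) ((a - t) / (1 - t)) (mem2 a ha hat)
    rw [← hγ₂0, this, hd2, abs_of_nonpos (by
      have : 0 ≤ (a - t) / (1 - t) := div_nonneg (by linarith) ht'.le; linarith)]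
    field_simp
    ring
  by_cases hst : s ≤ t <;> by_cases hst' : s' ≤ t
  · -- both in first piece
    have heq := hγ₁ (s / t) (mem1 s hs.1 hst) (s' / t) (mem1 s' hs'.1 hst')
    have hgs : g s = γ₁ (s / t) := by simp [hg, hst]
    have hgs' : g s' = γ₁ (s' / t) := by simp [hg, hst']
    rw [hgs, hgs', heq, hd1, abs_of_nonpos (by
      have : s / t ≤ s' / t := by gcongr
      linarith)]
    apply le_of_eq
    field_simp
    ring
  · -- mixed
    have h1z := left_z s hs.1 hst
    have h2z := right_z s' (le_of_not_ge hst') hs'.2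
    have hgs : g s = γ₁ (s / t) := by simp [hg, hst]
    have hgs' : g s' = γ₂ ((s' - t) / (1 - t)) := by simp [hg, hst']
    rw [hgs, hgs']
    calc dist (γ₁ (s / t)) (γ₂ ((s' - t) / (1 - t)))
        ≤ dist (γ₁ (s / t)) z + dist z (γ₂ ((s' - t) / (1 - t))) := dist_triangle _ _ _
      _ = (t - s) * D + (s' - t) * D := by rw [h1z, h2z]
      _ = (s' - s) * D := by ring
  · exact absurd (hss.trans hst') hst
  · -- both in second piece
    have hts : t ≤ s := (not_le.mp hst).le
    have heq := hγ₂ ((s - t) / (1 - t)) (mem2 s hts hs.2) ((s' - t) / (1 - t)) (mem2 s' (hts.trans hss) hs'.2)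
    have hgs : g s = γ₂ ((s - t) / (1 - t)) := by simp [hg, hst]
    have hgs' : g s' = γ₂ ((s' - t) / (1 - t)) := by simp [hg, hst']
    rw [hgs, hgs', heq, hd2, abs_of_nonpos (by
      have : (s - t) / (1 - t) ≤ (s' - t) / (1 - t) := by gcongr
      linarith)]
    apply le_of_eq
    field_simp
    ring

theorem evolution_set_compact
    {X : Type*} [MetricSpace X] [ProperSpace X] [CompleteSpace X]
    [TopologicalSpace.SeparableSpace X]
    (hgeo : GeodesicMetricSpace X)
    (Λ : Set (X × X)) (hΛcpt : IsCompact Λ)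
    (A : Set X) (hAcpt : IsCompact A)
    (t : ℝ) (ht : t ∈ Set.Icc (0:ℝ) 1) :
    IsCompact (evoSet A Λ t) := by
  rw [isCompact_iff_isSeqCompact]
  intro u hu
  choose γ hγ hA hΛ hz using hu
  -- bound on dist over Λ
  obtain ⟨p₀, -, hC⟩ := hΛcpt.exists_isMaxOn ⟨_, hΛ 0⟩
    ((continuous_fst.dist continuous_snd).continuousOn)
  set C := dist p₀.1 p₀.2 with hCdef
  replace hC : ∀ q ∈ Λ, dist q.1 q.2 ≤ C := fun q hq => hC hq
  have hC0 : 0 ≤ C := le_trans dist_nonneg (hC _ (hΛ 0))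
  set a₀ := γ 0 0 with ha₀
  obtain ⟨r, hr⟩ := hAcpt.isBounded.subset_closedBall a₀
  -- all u n in a fixed closed ball
  have hball : ∀ n, u n ∈ closedBall a₀ (C + r) := by
    intro n
    have h1 : dist (u n) (γ n 0) ≤ C := by
      rw [← hz n]
      have := hγ n t ht 0 (by norm_num)
      rw [this]
      have hd := hC _ (hΛ n)
      have hd0 : (0:ℝ) ≤ dist (γ n 0) (γ n 1) := dist_nonneg
      have habs : |t - 0| = t := by rw [sub_zero, abs_of_nonneg ht.1]
      rw [habs]
      nlinarith [ht.1, ht.2]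
    have h2 : dist (γ n 0) a₀ ≤ r := by
      have := hr (hA n); rwa [mem_closedBall] at this
    have := dist_triangle (u n) (γ n 0) a₀
    rw [mem_closedBall]
    linarith
  -- extract convergent subsequence of u
  obtain ⟨z, -, φ, hφ, hzlim⟩ :=
    (isCompact_closedBall a₀ (C + r)).isSeqCompact hball
  -- extract convergent subsequence of endpoint pairs
  have hKcpt : IsCompact (Λ ∩ (A ×ˢ (univ : Set X))) :=
    hΛcpt.inter_right ((hAcpt.isClosed).prod isClosed_univ)
  have hmem : ∀ n, (γ (φ n) 0, γ (φ n) 1) ∈ Λ ∩ (A ×ˢ (univ : Set X)) :=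
    fun n => ⟨hΛ _, hA _, mem_univ _⟩
  obtain ⟨⟨x, y⟩, hxyK, ψ, hψ, hxylim⟩ := hKcpt.isSeqCompact hmem
  have hxΛ : (x, y) ∈ Λ := hxyK.1
  have hxA : x ∈ A := hxyK.2.1
  set σ := φ ∘ ψ with hσ
  have hσmono : StrictMono σ := hφ.comp hψ
  have hulim : Tendsto (fun n => u (σ n)) atTop (𝓝 z) := hzlim.comp hψ.tendsto_atTop
  have hxlim : Tendsto (fun n => γ (σ n) 0) atTop (𝓝 x) :=
    (continuous_fst.tendsto _).comp hxylim
  have hylim : Tendsto (fun n => γ (σ n) 1) atTop (𝓝 y) :=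
    (continuous_snd.tendsto _).comp hxylim
  have hDlim : Tendsto (fun n => dist (γ (σ n) 0) (γ (σ n) 1)) atTop (𝓝 (dist x y)) :=
    hxlim.dist hylim
  -- dist x z = t * dist x y
  have h1 : dist x z = t * dist x y := by
    have hl : Tendsto (fun n => dist (γ (σ n) 0) (u (σ n))) atTop (𝓝 (dist x z)) :=
      hxlim.dist hulim
    have heq : ∀ n, dist (γ (σ n) 0) (u (σ n)) = t * dist (γ (σ n) 0) (γ (σ n) 1) := by
      intro n
      rw [← hz (σ n), dist_comm]
      rw [hγ (σ n) t ht 0 (by norm_num), sub_zero, abs_of_nonneg ht.1]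
    rw [funext heq] at hl
    exact tendsto_nhds_unique hl (hDlim.const_mul t)
  have h2 : dist z y = (1 - t) * dist x y := by
    have hl : Tendsto (fun n => dist (u (σ n)) (γ (σ n) 1)) atTop (𝓝 (dist z y)) :=
      hulim.dist hylim
    have heq : ∀ n, dist (u (σ n)) (γ (σ n) 1) = (1 - t) * dist (γ (σ n) 0) (γ (σ n) 1) := by
      intro n
      rw [← hz (σ n), hγ (σ n) t ht 1 (by norm_num), abs_of_nonpos (by linarith [ht.2])]
      ring_nf
    rw [funext heq] at hl
    exact tendsto_nhds_unique hl (hDlim.const_mul (1 - t))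
  obtain ⟨g, hg, hg0, hg1, hgt⟩ :=
    exists_geodesic_through_s15 hgeo x y z t ht.1 ht.2 h1 h2
  exact ⟨z, ⟨g, hg, hg0 ▸ hxA, by rw [hg0, hg1]; exact hxΛ, hgt⟩, σ, hσmono, hulim⟩
end
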